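/- arXiv:1207.3518 — 4 statements merged into one kernel-verified Lean document; each statement's English description precedes it below -/
import Mathlib

section
/- There exists a connected, simple, locally finite graph G such that the adjacency operator A_G has deficiency indices η₊(A_G) = η₋(A_G) = 1. -/
noncomputable section

open scoped ComplexConjugate

namespace DefIdx

/-- The Hilbert space `ℓ²(V)` of square-summable complex functions on `V`. -/
abbrev L2 (V : Type*) := lp (fun _ : V => ℂ) 2

lemma memℓp_of_finite {V : Type*} {f : V → ℂ} (h : {x | f x ≠ 0}.Finite) :
    Memℓp f 2 :=
  (memℓp_zero h).of_exponent_ge zero_le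

/-- The subspace `C_c(V)` of finitely supported elements of `ℓ²(V)`. -/
def Cc (V : Type*) : Submodule ℂ (L2 V) where
  carrier := {f | {x | (f : ∀ _ : V, ℂ) x ≠ 0}.Finite}
  zero_mem' := by
    simp only [Set.mem_setOf_eq, lp.coeFn_zero, Pi.zero_apply, ne_eq, not_true_eq_false]
    simp
  add_mem' := by
    intro f g hf hg
    refine (hf.union hg).subset ?_
    intro x hx
    simp only [Set.mem_setOf_eq, lp.coeFn_add, Pi.add_apply] at hx ⊢
    by_contra hc
    try push_neg at hc
    simp only [Set.mem_union, Set.mem_setOf_eq, not_or, not_not] at hc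
    simp [hc.1, hc.2] at hx
  smul_mem' := by
    intro c f hf
    refine hf.subset ?_
    intro x hx
    simp only [Set.mem_setOf_eq, lp.coeFn_smul, Pi.smul_apply, smul_eq_mul] at hx ⊢
    intro h0
    simp [h0] at hx

section Adjacency

variable {V : Type*}

/-- The pointwise action of the adjacency matrix of a locally finite graph. -/
def adjA (G : SimpleGraph V) (hG : G.LocallyFinite) (f : V → ℂ) (x : V) : ℂ :=
  ∑ y ∈ @SimpleGraph.neighborFinset V G x (hG x), f y

lemma adjA_support (G : SimpleGraph V) (hG : G.LocallyFinite) {f : V → ℂ}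
    (hf : {x | f x ≠ 0}.Finite) : {x | adjA G hG f x ≠ 0}.Finite := by
  have hsub : {x | adjA G hG f x ≠ 0} ⊆ ⋃ y ∈ {x | f x ≠ 0}, (G.neighborSet y) := by
    intro x hx
    obtain ⟨y, hy, hfy⟩ := Finset.exists_ne_zero_of_sum_ne_zero hx
    have hadj : G.Adj x y := by
      have := @SimpleGraph.mem_neighborFinset V G x (hG x) y
      exact this.mp hy
    exact Set.mem_biUnion hfy (SimpleGraph.mem_neighborSet G y x |>.mpr hadj.symm)
  exact (hf.biUnion fun y _ => by haveI := hG y; exact (G.neighborSet y).toFinite).subset hsub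

/-- The adjacency operator of a locally finite graph, as a densely defined operator
on `ℓ²(V)` with domain the finitely supported functions. -/
def adjOp (G : SimpleGraph V) (hG : G.LocallyFinite) : L2 V →ₗ.[ℂ] L2 V where
  domain := Cc V
  toFun :=
    { toFun := fun f => ⟨adjA G hG f, memℓp_of_finite (adjA_support G hG f.2)⟩
      map_add' := by
        intro f g
        apply lp.ext
        funext x
        simp only [lp.coeFn_add, Pi.add_apply]
        show adjA G hG (((f : L2 V) + (g : L2 V) : L2 V)) x = _
        simp only [adjA, lp.coeFn_add, Pi.add_apply]
        exact Finset.sum_add_distrib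
      map_smul' := by
        intro c f
        apply lp.ext
        funext x
        simp only [RingHom.id_apply, lp.coeFn_smul, Pi.smul_apply, smul_eq_mul]
        show adjA G hG ((c • (f : L2 V) : L2 V)) x = _
        simp only [adjA, lp.coeFn_smul, Pi.smul_apply, smul_eq_mul]
        exact (Finset.mul_sum _ _ _).symm }

/-- The pointwise action of the combinatorial (physical) Laplacian. -/
def lapA (G : SimpleGraph V) (hG : G.LocallyFinite) (f : V → ℂ) (x : V) : ℂ :=
  ∑ y ∈ @SimpleGraph.neighborFinset V G x (hG x), (f x - f y)

lemma lapA_support (G : SimpleGraph V) (hG : G.LocallyFinite) {f : V → ℂ}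
    (hf : {x | f x ≠ 0}.Finite) : {x | lapA G hG f x ≠ 0}.Finite := by
  have hsub : {x | lapA G hG f x ≠ 0} ⊆
      {x | f x ≠ 0} ∪ ⋃ y ∈ {x | f x ≠ 0}, (G.neighborSet y) := by
    intro x hx
    by_contra hc
    simp only [Set.mem_union, Set.mem_setOf_eq, not_or, not_not] at hc
    obtain ⟨hfx, hmem⟩ := hc
    apply hx
    show lapA G hG f x = 0
    unfold lapA
    refine Finset.sum_eq_zero fun y hy => ?_
    have hadj : G.Adj x y := (@SimpleGraph.mem_neighborFinset V G x (hG x) y).mp hy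
    have hfy : f y = 0 := by
      by_contra hfy
      exact hmem (Set.mem_biUnion hfy ((SimpleGraph.mem_neighborSet G y x).mpr hadj.symm))
    rw [hfx, hfy, sub_zero]
  refine Set.Finite.subset ?_ hsub
  exact hf.union (hf.biUnion fun y _ => by haveI := hG y; exact (G.neighborSet y).toFinite)

/-- The combinatorial (physical) Laplacian of a locally finite graph, as a densely
defined operator on `ℓ²(V)` with domain the finitely supported functions. -/
def lapOp (G : SimpleGraph V) (hG : G.LocallyFinite) : L2 V →ₗ.[ℂ] L2 V where
  domain := Cc V
  toFun :=
    { toFun := fun f => ⟨lapA G hG f, memℓp_of_finite (lapA_support G hG f.2)⟩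
      map_add' := by
        intro f g
        apply lp.ext
        funext x
        simp only [lp.coeFn_add, Pi.add_apply]
        show lapA G hG (((f : L2 V) + (g : L2 V) : L2 V)) x = _
        simp only [lapA, lp.coeFn_add, Pi.add_apply]
        rw [← Finset.sum_add_distrib]
        exact Finset.sum_congr rfl fun y _ => by ring
      map_smul' := by
        intro c f
        apply lp.ext
        funext x
        simp only [RingHom.id_apply, lp.coeFn_smul, Pi.smul_apply, smul_eq_mul]
        show lapA G hG ((c • (f : L2 V) : L2 V)) x = _
        simp only [lapA, lp.coeFn_smul, Pi.smul_apply, smul_eq_mul]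
        rw [Finset.mul_sum]
        exact Finset.sum_congr rfl fun y _ => by ring }

end Adjacency

section Jacobi

/-- The pointwise action of the Jacobi matrix with off-diagonal entries `a n` and
diagonal entries `b n` (with the convention `a (-1) = 0`). -/
def jacA (a b : ℕ → ℝ) (f : ℕ → ℂ) (n : ℕ) : ℂ :=
  (if n = 0 then 0 else (a (n - 1) : ℂ) * f (n - 1)) + (b n : ℂ) * f n + (a n : ℂ) * f (n + 1)

lemma jacA_support (a b : ℕ → ℝ) {f : ℕ → ℂ} (hf : {n | f n ≠ 0}.Finite) :
    {n | jacA a b f n ≠ 0}.Finite := by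
  have hsub : {n | jacA a b f n ≠ 0} ⊆
      (fun m => m + 1) '' {n | f n ≠ 0} ∪ {n | f n ≠ 0} ∪ (fun m => m - 1) '' {n | f n ≠ 0} := by
    intro n hn
    by_contra hc
    simp only [Set.mem_union, not_or] at hc
    apply hn
    show jacA a b f n = 0
    have h1 : f n = 0 := by
      by_contra h; exact hc.1.2 h
    have h3 : f (n + 1) = 0 := by
      by_contra h
      exact hc.2 ⟨n + 1, h, by show n + 1 - 1 = n; omega⟩
    rcases Nat.eq_zero_or_pos n with h0 | h0
    · subst h0; simp [jacA, h1, h3]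
    · have h2 : f (n - 1) = 0 := by
        by_contra h
        exact hc.1.1 ⟨n - 1, h, by show n - 1 + 1 = n; omega⟩
      simp [jacA, h1, h2, h3]
  refine Set.Finite.subset ?_ hsub
  exact ((hf.image _).union hf).union (hf.image _)

/-- The Jacobi matrix with off-diagonal entries `a n > 0` and diagonal entries `b n`,
as a densely defined operator on `ℓ²(ℕ)` with domain the finitely supported sequences. -/
def jacOp (a b : ℕ → ℝ) : L2 ℕ →ₗ.[ℂ] L2 ℕ where
  domain := Cc ℕ
  toFun :=
    { toFun := fun f => ⟨jacA a b f, memℓp_of_finite (jacA_support a b f.2)⟩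
      map_add' := by
        intro f g
        apply lp.ext
        funext n
        simp only [lp.coeFn_add, Pi.add_apply]
        show jacA a b (((f : L2 ℕ) + (g : L2 ℕ) : L2 ℕ)) n = _
        simp only [jacA, lp.coeFn_add, Pi.add_apply]
        split <;> ring
      map_smul' := by
        intro c f
        apply lp.ext
        funext n
        simp only [RingHom.id_apply, lp.coeFn_smul, Pi.smul_apply, smul_eq_mul]
        show jacA a b ((c • (f : L2 ℕ) : L2 ℕ)) n = _
        simp only [jacA, lp.coeFn_smul, Pi.smul_apply, smul_eq_mul]
        split <;> ring }

end Jacobi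

section Eta

variable {H : Type*} [NormedAddCommGroup H] [InnerProductSpace ℂ H] [CompleteSpace H]

/-- The deficiency subspace `ker (T* - z)` of a (partially defined) operator. -/
def defSubspace (T : H →ₗ.[ℂ] H) (z : ℂ) : Submodule ℂ T.adjoint.domain :=
  LinearMap.ker (T.adjoint.toFun - z • T.adjoint.domain.subtype)

/-- The deficiency index `η₊(T) = dim ker (T* - i)`. -/
def etaP (T : H →ₗ.[ℂ] H) : Cardinal := Module.rank ℂ (defSubspace T Complex.I)

/-- The deficiency index `η₋(T) = dim ker (T* + i)`. -/
def etaM (T : H →ₗ.[ℂ] H) : Cardinal := Module.rank ℂ (defSubspace T (-Complex.I))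

/-- A partially defined operator is symmetric if `⟪T f, g⟫ = ⟪f, T g⟫` on its domain. -/
def IsSymm (T : H →ₗ.[ℂ] H) : Prop :=
  ∀ f g : T.domain, (inner ℂ (T f) (g : H) : ℂ) = inner ℂ (f : H) (T g)

/-- A densely defined operator is essentially self-adjoint if its closure is self-adjoint. -/
def EssSelfAdj (T : H →ₗ.[ℂ] H) : Prop :=
  T.closure.adjoint = T.closure

/-- The restriction of the sum of two partially defined operators to the domain
of the first one, assuming domain inclusion. -/
def sumRestrict (S T : H →ₗ.[ℂ] H) (h : S.domain ≤ T.domain) : H →ₗ.[ℂ] H :=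
  ⟨S.domain, S.toFun + T.toFun.comp (Submodule.inclusion h)⟩

/-- The sum of a partially defined operator and a bounded operator, with the
domain of the former. -/
def addBdd (S : H →ₗ.[ℂ] H) (B : H →L[ℂ] H) : H →ₗ.[ℂ] H :=
  ⟨S.domain, S.toFun + (B : H →ₗ[ℂ] H).comp S.domain.subtype⟩

end Eta

section Graphs

variable {V : Type*}

/-- The sphere of radius `n` around the vertex `v` (w.r.t. the graph metric). -/
def sphere (G : SimpleGraph V) (v : V) (n : ℕ) : Set V := {w | G.dist v w = n}

/-- A connected graph is an antitree with root `v` if every vertex `w ≠ v` at distance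
`n ≥ 1` from `v` has exactly `S_{n-1}(v) ∪ S_{n+1}(v)` as its set of neighbours. -/
def IsAntitree (G : SimpleGraph V) (v : V) : Prop :=
  G.Connected ∧ ∀ w, w ≠ v →
    G.neighborSet w = sphere G v (G.dist v w - 1) ∪ sphere G v (G.dist v w + 1)

/-- A function is radially symmetric (w.r.t. the root `v`) if it is constant on
each sphere around `v`. -/
def RadSymm (G : SimpleGraph V) (v : V) (f : V → ℂ) : Prop :=
  ∀ x y, G.dist v x = G.dist v y → f x = f y

/-- The average of `f` over the sphere of radius `n` around `v`. -/
def sphAvg (G : SimpleGraph V) (v : V) (hfin : ∀ n, (sphere G v n).Finite)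
    (f : V → ℂ) (n : ℕ) : ℂ :=
  (1 / ((sphere G v n).ncard : ℂ)) * ∑ y ∈ (hfin n).toFinset, f y

/-- The sphere-averaging map `P`. -/
def sphP (G : SimpleGraph V) (v : V) (hfin : ∀ n, (sphere G v n).Finite)
    (f : V → ℂ) (x : V) : ℂ :=
  sphAvg G v hfin f (G.dist v x)

/-- The disjoint union of `n` copies of a graph. -/
def copies (G : SimpleGraph V) (n : ℕ) : SimpleGraph (Fin n × V) where
  Adj p q := p.1 = q.1 ∧ G.Adj p.2 q.2
  symm := ⟨fun p q h => ⟨h.1.symm, h.2.symm⟩⟩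
  loopless := ⟨fun q h => G.loopless.irrefl q.2 h.2⟩

/-- The disjoint union of copies of a locally finite graph is locally finite. -/
def copiesLF (G : SimpleGraph V) (hG : G.LocallyFinite) (n : ℕ) :
    (copies G n).LocallyFinite := fun p =>
  Set.Finite.fintype (by
    haveI := hG p.2
    have hsub : (copies G n).neighborSet p ⊆ (fun w => (p.1, w)) '' (G.neighborSet p.2) := by
      rintro ⟨i, w⟩ ⟨h1, h2⟩
      exact ⟨w, h2, by simp [h1]⟩
    exact ((G.neighborSet p.2).toFinite.image _).subset hsub)

end Graphs



namespace Example1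

/-- The vertex set of the antitree with sphere sizes `8 ^ n`. -/
abbrev Vt : Type := Σ n : ℕ, Fin (8 ^ n)

instance : Countable Vt := by unfold Vt; infer_instance

instance : DecidableEq Vt := by unfold Vt; exact inferInstance

/-- The antitree: a vertex at level `n` is adjacent to all vertices at levels `n ± 1`. -/
def Gr : SimpleGraph Vt where
  Adj p q := p.1 = q.1 + 1 ∨ q.1 = p.1 + 1
  symm := ⟨fun p q h => h.symm⟩
  loopless := ⟨fun p h => by rcases h with h | h <;> omega⟩

/-- The level-`k` sphere as a finset. -/
def lvl (k : ℕ) : Finset Vt := Finset.univ.image (fun b : Fin (8 ^ k) => (⟨k, b⟩ : Vt))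

lemma mem_lvl {q : Vt} {k : ℕ} : q ∈ lvl k ↔ q.1 = k := by
  constructor
  · intro hq
    simp only [lvl, Finset.mem_image, Finset.mem_univ, true_and] at hq
    obtain ⟨b, hb⟩ := hq
    rw [← hb]
  · intro h
    rcases q with ⟨m, b⟩
    cases h
    exact Finset.mem_image.mpr ⟨b, Finset.mem_univ b, rfl⟩

lemma lvl_finite (k : ℕ) : {q : Vt | q.1 = k}.Finite := by
  refine (lvl k).finite_toSet.subset ?_
  intro q hq
  exact mem_lvl.mpr hq

/-- The antitree is locally finite. -/
def hGr : Gr.LocallyFinite := fun p =>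
  Set.Finite.fintype (((lvl_finite (p.1 - 1)).union (lvl_finite (p.1 + 1))).subset (by
    rintro ⟨m, b⟩ h
    have h' : p.1 = m + 1 ∨ m = p.1 + 1 := h
    show m = p.1 - 1 ∨ m = p.1 + 1
    omega))

lemma nf_eq (n : ℕ) (a : Fin (8 ^ n)) :
    @SimpleGraph.neighborFinset Vt Gr ⟨n, a⟩ (hGr ⟨n, a⟩) =
      (if n = 0 then (∅ : Finset Vt) else lvl (n - 1)) ∪ lvl (n + 1) := by
  ext q
  rw [SimpleGraph.mem_neighborFinset, Finset.mem_union]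
  have hadj : Gr.Adj ⟨n, a⟩ q ↔ (n = q.1 + 1 ∨ q.1 = n + 1) := Iff.rfl
  rw [hadj]
  split_ifs with h
  · subst h
    simp only [Finset.notMem_empty, false_or, mem_lvl]
    omega
  · rw [mem_lvl, mem_lvl]
    omega

lemma sum_lvl (g : Vt → ℂ) (k : ℕ) :
    ∑ q ∈ lvl k, g q = ∑ b : Fin (8 ^ k), g ⟨k, b⟩ := by
  rw [lvl, Finset.sum_image]
  intro x _ y _ h
  have := (Sigma.mk.inj_iff.mp h).2
  exact eq_of_heq this

lemma adjA_eq (g : Vt → ℂ) (n : ℕ) (a : Fin (8 ^ n)) :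
    adjA Gr hGr g ⟨n, a⟩ =
      (if n = 0 then 0 else ∑ b : Fin (8 ^ (n - 1)), g ⟨n - 1, b⟩) +
        ∑ b : Fin (8 ^ (n + 1)), g ⟨n + 1, b⟩ := by
  have hdisj : Disjoint (if n = 0 then (∅ : Finset Vt) else lvl (n - 1)) (lvl (n + 1)) := by
    split_ifs with h
    · exact Finset.disjoint_empty_left _
    · rw [Finset.disjoint_left]
      intro q hq hq'
      rw [mem_lvl] at hq hq'
      omega
  show ∑ y ∈ @SimpleGraph.neighborFinset Vt Gr ⟨n, a⟩ (hGr ⟨n, a⟩), g y = _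
  rw [nf_eq, Finset.sum_union hdisj]
  congr 1
  · split_ifs with h
    · simp
    · exact sum_lvl g (n - 1)
  · exact sum_lvl g (n + 1)

/-- abbreviation for the neighbor finset with the `hGr` instance -/
def N (x : Vt) : Finset Vt := @SimpleGraph.neighborFinset Vt Gr x (hGr x)

lemma mem_N {x y : Vt} : y ∈ N x ↔ Gr.Adj x y := @SimpleGraph.mem_neighborFinset Vt Gr x (hGr x) y

lemma adjA_def (g : Vt → ℂ) (x : Vt) : adjA Gr hGr g x = ∑ y ∈ N x, g y := rfl

/-- Summation by parts (symmetry of the adjacency form). -/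
lemma swap_sum (u f : Vt → ℂ) (sf : Finset Vt) (hf : ∀ x ∉ sf, f x = 0) :
    ∑ x ∈ sf, adjA Gr hGr u x * f x =
      ∑ y ∈ sf.biUnion N, u y * adjA Gr hGr f y := by
  classical
  have step1 : ∀ x ∈ sf, adjA Gr hGr u x * f x =
      ∑ y ∈ sf.biUnion N, (if y ∈ N x then u y * f x else 0) := by
    intro x hx
    rw [adjA_def, Finset.sum_mul]
    rw [Finset.sum_ite_mem]
    congr 1
    ext y
    simp only [Finset.mem_inter, Finset.mem_biUnion]
    constructor
    · intro hy; exact ⟨⟨x, hx, hy⟩, hy⟩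
    · intro hy; exact hy.2
  rw [Finset.sum_congr rfl step1, Finset.sum_comm]
  refine Finset.sum_congr rfl fun y hy => ?_
  have hsymm : ∀ x, (y ∈ N x) = (x ∈ N y) := by
    intro x
    simp only [mem_N]
    exact propext ⟨fun h => h.symm, fun h => h.symm⟩
  calc ∑ x ∈ sf, (if y ∈ N x then u y * f x else 0)
      = ∑ x ∈ sf, (if x ∈ N y then u y * f x else 0) := by
        exact Finset.sum_congr rfl fun x _ => if_congr (iff_of_eq (hsymm x)) rfl rfl
    _ = ∑ x ∈ sf ∩ N y, u y * f x := by rw [Finset.sum_ite_mem]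
    _ = ∑ x ∈ N y, u y * f x := by
        refine Finset.sum_subset (Finset.inter_subset_right) fun x hx hx' => ?_
        have : x ∉ sf := fun hxs => hx' (Finset.mem_inter.mpr ⟨hxs, hx⟩)
        rw [hf x this, mul_zero]
    _ = u y * adjA Gr hGr f y := by rw [adjA_def, Finset.mul_sum]

lemma adjA_support_subset (f : Vt → ℂ) (sf : Finset Vt) (hf : ∀ x ∉ sf, f x = 0) :
    ∀ y ∉ sf.biUnion N, adjA Gr hGr f y = 0 := by
  intro y hy
  rw [adjA_def]
  refine Finset.sum_eq_zero fun x hx => ?_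
  refine hf x fun hxs => hy ?_
  refine Finset.mem_biUnion.mpr ⟨x, hxs, ?_⟩
  rw [mem_N] at hx ⊢
  exact hx.symm

/-- the tsum form of symmetry. -/
lemma swap_tsum (u f : Vt → ℂ) (hf : {x | f x ≠ 0}.Finite) :
    ∑' x, adjA Gr hGr u x * f x = ∑' x, u x * adjA Gr hGr f x := by
  classical
  set sf := hf.toFinset with hsf
  have hf' : ∀ x ∉ sf, f x = 0 := by
    intro x hx
    by_contra h
    exact hx (hf.mem_toFinset.mpr h)
  rw [tsum_eq_sum (s := sf) (fun x hx => by rw [hf' x hx, mul_zero]),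
    tsum_eq_sum (s := sf.biUnion N)
      (fun x hx => by rw [adjA_support_subset f sf hf' x hx, mul_zero])]
  exact swap_sum u f sf hf'

lemma conj_adjA (g : Vt → ℂ) (x : Vt) :
    conj (adjA Gr hGr g x) = adjA Gr hGr (fun y => conj (g y)) x := by
  rw [adjA_def, adjA_def, map_sum]

lemma Cc_dense (V : Type*) : Dense ((Cc V : Submodule ℂ (L2 V)) : Set (L2 V)) := by
  classical
  intro f
  have hs := lp.hasSum_single (E := fun _ : V => ℂ) (p := 2) ENNReal.ofNat_ne_top f
  refine mem_closure_of_tendsto hs (Filter.Eventually.of_forall fun s => ?_)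
  refine Submodule.sum_mem _ fun i _ => ?_
  show {x | (lp.single 2 i (f i) : ∀ _ : V, ℂ) x ≠ 0}.Finite
  refine (Set.finite_singleton i).subset fun x hx => ?_
  by_contra hxi
  simp only [Set.mem_singleton_iff] at hxi
  exact hx (lp.single_apply_ne 2 i _ hxi)

lemma dense_dom : Dense ((adjOp Gr hGr).domain : Set (L2 Vt)) := Cc_dense Vt

/-- the key inner-product identity: `⟪h, f⟫ = ⟪g, A f⟫` when `adjA g = h`. -/
lemma inner_identity {g h : L2 Vt} (hgh : ∀ x, adjA Gr hGr (g : Vt → ℂ) x = h x)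
    (f : (adjOp Gr hGr).domain) :
    (inner ℂ h (f : L2 Vt) : ℂ) = inner ℂ (g : L2 Vt) ((adjOp Gr hGr) f) := by
  rw [lp.inner_eq_tsum, lp.inner_eq_tsum]
  simp only [RCLike.inner_apply']
  have hAf : ((adjOp Gr hGr) f : Vt → ℂ) = adjA Gr hGr (f : Vt → ℂ) := rfl
  have hfin : {x | (f : Vt → ℂ) x ≠ 0}.Finite := f.2
  calc ∑' i, conj (h i) * (f : Vt → ℂ) i
      = ∑' i, adjA Gr hGr (fun y => conj ((g : Vt → ℂ) y)) i * (f : Vt → ℂ) i := by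
        congr 1
        funext i
        rw [← conj_adjA, hgh]
    _ = ∑' i, conj ((g : Vt → ℂ) i) * adjA Gr hGr (f : Vt → ℂ) i :=
        swap_tsum _ _ hfin
    _ = ∑' i, conj ((g : Vt → ℂ) i) * ((adjOp Gr hGr) f : Vt → ℂ) i := by rw [hAf]

lemma adjoint_mem_and_eq {g h : L2 Vt} (hgh : ∀ x, adjA Gr hGr (g : Vt → ℂ) x = h x) :
    ∃ hg : g ∈ (adjOp Gr hGr).adjoint.domain, (adjOp Gr hGr).adjoint ⟨g, hg⟩ = h := by
  have hmem : g ∈ (adjOp Gr hGr).adjoint.domain := by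
    refine LinearPMap.mem_adjoint_domain_of_exists g ⟨h, fun x => ?_⟩
    exact inner_identity hgh x
  exact ⟨hmem, LinearPMap.adjoint_apply_eq dense_dom ⟨g, hmem⟩
    (fun x => inner_identity hgh x)⟩

/-- Conversely, the adjoint always acts as the formal adjacency operator. -/
lemma adjoint_pointwise (g : (adjOp Gr hGr).adjoint.domain) (x : Vt) :
    ((adjOp Gr hGr).adjoint g : Vt → ℂ) x = adjA Gr hGr ((g : L2 Vt) : Vt → ℂ) x := by
  classical
  have hδ : lp.single 2 x (1 : ℂ) ∈ (adjOp Gr hGr).domain := by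
    show {w | (lp.single 2 x (1 : ℂ) : ∀ _ : Vt, ℂ) w ≠ 0}.Finite
    refine (Set.finite_singleton x).subset fun w hw => ?_
    by_contra hwx
    simp only [Set.mem_singleton_iff] at hwx
    exact hw (lp.single_apply_ne 2 x 1 hwx)
  have hform := LinearPMap.adjoint_isFormalAdjoint dense_dom g
    (⟨lp.single 2 x (1 : ℂ), hδ⟩ : (adjOp Gr hGr).domain)
  have hsingle : ∀ w : Vt, (lp.single 2 x (1 : ℂ) : ∀ _ : Vt, ℂ) w
      = if w = x then 1 else 0 := by
    intro w
    by_cases hw : w = x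
    · subst hw; rw [lp.single_apply_self, if_pos rfl]
    · rw [lp.single_apply_ne 2 x 1 hw, if_neg hw]
  -- LHS of hform
  have hL : (inner ℂ ((adjOp Gr hGr).adjoint g)
      ((⟨lp.single 2 x (1 : ℂ), hδ⟩ : (adjOp Gr hGr).domain) : L2 Vt) : ℂ)
      = conj (((adjOp Gr hGr).adjoint g : Vt → ℂ) x) := by
    rw [lp.inner_eq_tsum]
    simp only [RCLike.inner_apply']
    rw [tsum_eq_single x]
    · rw [hsingle, if_pos rfl, mul_one]
    · intro w hw
      rw [hsingle, if_neg hw, mul_zero]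
  -- RHS of hform
  have hAδ : ∀ w : Vt, adjA Gr hGr (lp.single 2 x (1 : ℂ) : ∀ _ : Vt, ℂ) w
      = if w ∈ N x then 1 else 0 := by
    intro w
    rw [adjA_def]
    have : ∀ y ∈ N w, (lp.single 2 x (1 : ℂ) : ∀ _ : Vt, ℂ) y = if y = x then 1 else 0 :=
      fun y _ => hsingle y
    rw [Finset.sum_congr rfl this, Finset.sum_ite_eq' (N w) x (fun _ => (1 : ℂ))]
    congr 1
    simp only [mem_N]
    exact propext ⟨fun hx' => hx'.symm, fun hx' => hx'.symm⟩
  have hR : (inner ℂ ((g : L2 Vt))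
      ((adjOp Gr hGr) (⟨lp.single 2 x (1 : ℂ), hδ⟩ : (adjOp Gr hGr).domain)) : ℂ)
      = conj (adjA Gr hGr ((g : L2 Vt) : Vt → ℂ) x) := by
    rw [lp.inner_eq_tsum]
    simp only [RCLike.inner_apply']
    have hcoe : ((adjOp Gr hGr) (⟨lp.single 2 x (1 : ℂ), hδ⟩ : (adjOp Gr hGr).domain) : Vt → ℂ)
        = adjA Gr hGr (lp.single 2 x (1 : ℂ) : ∀ _ : Vt, ℂ) := rfl
    calc ∑' w, conj (((g : L2 Vt) : Vt → ℂ) w)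
          * ((adjOp Gr hGr) (⟨lp.single 2 x (1 : ℂ), hδ⟩ : (adjOp Gr hGr).domain) : Vt → ℂ) w
        = ∑' w, conj (((g : L2 Vt) : Vt → ℂ) w) * (if w ∈ N x then 1 else 0) := by
          congr 1
          funext w
          rw [hcoe, hAδ]
      _ = ∑ w ∈ N x, conj (((g : L2 Vt) : Vt → ℂ) w) * 1 := by
          rw [tsum_eq_sum (s := N x)]
          · exact Finset.sum_congr rfl fun w hw => by rw [if_pos hw]
          · intro w hw
            rw [if_neg hw, mul_zero]
      _ = conj (adjA Gr hGr ((g : L2 Vt) : Vt → ℂ) x) := by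
          rw [adjA_def, map_sum]
          exact Finset.sum_congr rfl fun w _ => mul_one _
  have := hL.symm.trans (hform.trans hR)
  exact star_injective this

lemma mem_defSubspace_iff (z : ℂ) (y : (adjOp Gr hGr).adjoint.domain) :
    y ∈ defSubspace (adjOp Gr hGr) z ↔
      ∀ x, adjA Gr hGr ((y : L2 Vt) : Vt → ℂ) x = z * ((y : L2 Vt) : Vt → ℂ) x := by
  rw [defSubspace, LinearMap.mem_ker, LinearMap.sub_apply, LinearMap.smul_apply, sub_eq_zero]
  constructor
  · intro hy x
    have h1 : ((adjOp Gr hGr).adjoint y : Vt → ℂ) x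
        = ((z • ((y : L2 Vt)) : L2 Vt) : Vt → ℂ) x := by
      rw [show (adjOp Gr hGr).adjoint y = (adjOp Gr hGr).adjoint.toFun y from rfl, hy]; rfl
    rw [adjoint_pointwise y x] at h1
    rw [h1, lp.coeFn_smul, Pi.smul_apply, smul_eq_mul]
  · intro hy
    obtain ⟨hg, heq⟩ := adjoint_mem_and_eq (g := (y : L2 Vt)) (h := z • (y : L2 Vt))
      (fun x => by rw [hy x, lp.coeFn_smul, Pi.smul_apply, smul_eq_mul])
    have hyy : (⟨(y : L2 Vt), hg⟩ : (adjOp Gr hGr).adjoint.domain) = y := Subtype.ext rfl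
    rw [hyy] at heq
    exact heq

/-- the root vertex. -/
def root : Vt := ⟨0, ⟨0, by norm_num⟩⟩

/-- evaluation at the root, as a linear map on the deficiency subspace. -/
def toRoot (z : ℂ) : defSubspace (adjOp Gr hGr) z →ₗ[ℂ] ℂ where
  toFun y := (((y : (adjOp Gr hGr).adjoint.domain) : L2 Vt) : Vt → ℂ) root
  map_add' y y' := rfl
  map_smul' c y := rfl

/-- radial symmetry of deficiency elements. -/
lemma radial (z : ℂ) (hz : z ≠ 0) {g : Vt → ℂ}
    (heq : ∀ x, adjA Gr hGr g x = z * g x) (n : ℕ) (a b : Fin (8 ^ n)) :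
    g ⟨n, a⟩ = g ⟨n, b⟩ := by
  have ha := heq ⟨n, a⟩
  have hb := heq ⟨n, b⟩
  rw [adjA_eq] at ha hb
  have : z * g ⟨n, a⟩ = z * g ⟨n, b⟩ := by rw [← ha, ← hb]
  exact mul_left_cancel₀ hz this

lemma fin_pos (n : ℕ) : 0 < 8 ^ n := Nat.pow_pos (by norm_num)

/-- the common value of a radial function on level `n`. -/
def uval (g : Vt → ℂ) (n : ℕ) : ℂ := g ⟨n, ⟨0, fin_pos n⟩⟩

lemma sum_radial (z : ℂ) (hz : z ≠ 0) {g : Vt → ℂ}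
    (heq : ∀ x, adjA Gr hGr g x = z * g x) (k : ℕ) :
    ∑ b : Fin (8 ^ k), g ⟨k, b⟩ = (8 : ℂ) ^ k * uval g k := by
  have : ∀ b : Fin (8 ^ k), g ⟨k, b⟩ = uval g k := fun b => radial z hz heq k b _
  rw [Finset.sum_congr rfl fun b _ => this b, Finset.sum_const, Finset.card_univ,
    Fintype.card_fin, nsmul_eq_mul]
  norm_num

/-- the recursion satisfied by the radial values. -/
lemma recursion (z : ℂ) (hz : z ≠ 0) {g : Vt → ℂ}
    (heq : ∀ x, adjA Gr hGr g x = z * g x) (n : ℕ) :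
    (if n = 0 then 0 else (8 : ℂ) ^ (n - 1) * uval g (n - 1)) +
      (8 : ℂ) ^ (n + 1) * uval g (n + 1) = z * uval g n := by
  have h := heq ⟨n, ⟨0, fin_pos n⟩⟩
  rw [adjA_eq] at h
  rw [← sum_radial z hz heq (n + 1)]
  rcases Nat.eq_zero_or_pos n with h0 | h0
  · subst h0
    simpa [uval] using h
  · rw [if_neg (by omega), ← sum_radial z hz heq (n - 1)]
    rw [if_neg (by omega)] at h
    exact h

lemma uval_zero_of_root_zero (z : ℂ) (hz : z ≠ 0) {g : Vt → ℂ}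
    (heq : ∀ x, adjA Gr hGr g x = z * g x) (h0 : uval g 0 = 0) :
    ∀ n, uval g n = 0 := by
  have h8 : ∀ k : ℕ, ((8 : ℂ) ^ k) ≠ 0 := fun k => pow_ne_zero k (by norm_num)
  have key : ∀ n, uval g n = 0 ∧ uval g (n + 1) = 0 := by
    intro n
    induction n with
    | zero =>
      refine ⟨h0, ?_⟩
      have := recursion z hz heq 0
      rw [if_pos rfl, zero_add, h0, mul_zero] at this
      exact (mul_eq_zero.mp this).resolve_left (h8 1)
    | succ m ih =>
      refine ⟨ih.2, ?_⟩
      have := recursion z hz heq (m + 1)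
      rw [if_neg (by omega), show m + 1 - 1 = m from rfl, ih.1, ih.2, mul_zero, mul_zero,
        zero_add] at this
      exact (mul_eq_zero.mp this).resolve_left (h8 (m + 2))
  exact fun n => (key n).1

lemma toRoot_injective (z : ℂ) (hz : z ≠ 0) : Function.Injective (toRoot z) := by
  rw [← LinearMap.ker_eq_bot]
  rw [LinearMap.ker_eq_bot']
  intro y hy
  set g : Vt → ℂ := (((y : (adjOp Gr hGr).adjoint.domain) : L2 Vt) : Vt → ℂ) with hg
  have heq : ∀ x, adjA Gr hGr g x = z * g x := (mem_defSubspace_iff z _).mp y.2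
  have h0 : uval g 0 = 0 := by
    have : g root = 0 := hy
    rw [uval]
    exact this
  have hall := uval_zero_of_root_zero z hz heq h0
  have hgz : ∀ x, g x = 0 := by
    rintro ⟨n, a⟩
    rw [radial z hz heq n a ⟨0, fin_pos n⟩]
    exact hall n
  have : ((y : (adjOp Gr hGr).adjoint.domain) : L2 Vt) = 0 := by
    apply lp.ext
    funext x
    exact hgz x
  exact Subtype.ext (Subtype.ext this)

/-- The explicit deficiency solution. -/
def usol (z : ℂ) : ℕ → ℂ
  | 0 => 1
  | 1 => z / 8
  | (n + 2) => (z * usol z (n + 1) - 8 ^ n * usol z n) / 8 ^ (n + 2)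

lemma usol_bound (z : ℂ) (hz : ‖z‖ ≤ 1) (n : ℕ) :
    ‖usol z n‖ ≤ (2 : ℝ) ^ n / 8 ^ n := by
  have key : ∀ m : ℕ, ‖usol z m‖ ≤ (2 : ℝ) ^ m / 8 ^ m ∧
      ‖usol z (m + 1)‖ ≤ (2 : ℝ) ^ (m + 1) / 8 ^ (m + 1) := by
    intro m
    induction m with
    | zero =>
      constructor
      · simp [usol]
      · show ‖z / 8‖ ≤ _
        rw [norm_div]
        simp only [Complex.norm_ofNat]
        calc ‖z‖ / 8 ≤ 1 / 8 := by
              apply div_le_div_of_nonneg_right hz; norm_num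
          _ ≤ 2 ^ 1 / 8 ^ 1 := by norm_num
    | succ m ih =>
      refine ⟨ih.2, ?_⟩
      show ‖(z * usol z (m + 1) - 8 ^ m * usol z m) / 8 ^ (m + 2)‖ ≤ _
      rw [norm_div, norm_pow]
      simp only [Complex.norm_ofNat]
      rw [div_le_div_iff₀ (by positivity) (by positivity)]
      have h1 : ‖z * usol z (m + 1) - 8 ^ m * usol z m‖
          ≤ ‖z‖ * ‖usol z (m + 1)‖ + 8 ^ m * ‖usol z m‖ := by
        refine (norm_sub_le _ _).trans (le_of_eq ?_)
        rw [norm_mul, norm_mul, norm_pow]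
        norm_num
      have h2 : ‖z‖ * ‖usol z (m + 1)‖ ≤ 2 ^ (m + 1) / 8 ^ (m + 1) := by
        calc ‖z‖ * ‖usol z (m + 1)‖ ≤ 1 * (2 ^ (m + 1) / 8 ^ (m + 1)) :=
              mul_le_mul hz ih.2 (norm_nonneg _) (by norm_num)
          _ = 2 ^ (m + 1) / 8 ^ (m + 1) := one_mul _
      have h3 : (8 : ℝ) ^ m * ‖usol z m‖ ≤ 2 ^ m := by
        calc (8 : ℝ) ^ m * ‖usol z m‖ ≤ 8 ^ m * (2 ^ m / 8 ^ m) := by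
              apply mul_le_mul_of_nonneg_left ih.1 (by positivity)
          _ = 2 ^ m := by field_simp
      calc ‖z * usol z (m + 1) - 8 ^ m * usol z m‖ * 8 ^ (m + 2)
          ≤ (2 ^ (m + 1) / 8 ^ (m + 1) + 2 ^ m) * 8 ^ (m + 2) :=
            mul_le_mul_of_nonneg_right (h1.trans (add_le_add h2 h3)) (by positivity)
        _ ≤ 2 ^ (m + 2) * 8 ^ (m + 2) := by
            apply mul_le_mul_of_nonneg_right _ (by positivity)
            have : (2 : ℝ) ^ (m + 1) / 8 ^ (m + 1) ≤ 1 := by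
              rw [div_le_one (by positivity)]
              apply pow_le_pow_left₀ (by norm_num) (by norm_num)
            have h2m : (2 : ℝ) ^ m ≤ 2 ^ (m + 1) := by
              apply pow_le_pow_right₀ (by norm_num); omega
            calc (2 : ℝ) ^ (m + 1) / 8 ^ (m + 1) + 2 ^ m ≤ 1 + 2 ^ (m + 1) :=
                  add_le_add this h2m
              _ ≤ 2 ^ (m + 1) + 2 ^ (m + 1) := by
                  apply add_le_add_left
                  exact one_le_pow₀ (by norm_num)
              _ = 2 ^ (m + 2) := by ring
  exact (key n).1

/-- the corresponding function on the vertex set. -/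
def gsol (z : ℂ) : Vt → ℂ := fun p => usol z p.1

lemma gsol_memℓp (z : ℂ) (hz : ‖z‖ ≤ 1) : Memℓp (gsol z) 2 := by
  apply memℓp_gen
  have htwo : (2 : ENNReal).toReal = 2 := by norm_num
  rw [htwo]
  have hnonneg : ∀ x : Vt, 0 ≤ ‖gsol z x‖ ^ (2 : ℝ) := fun x => by positivity
  rw [summable_sigma_of_nonneg hnonneg]
  constructor
  · intro n
    exact Summable.of_finite
  · have hfib : ∀ n : ℕ, ∑' b : Fin (8 ^ n), ‖gsol z ⟨n, b⟩‖ ^ (2 : ℝ)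
        = 8 ^ n * ‖usol z n‖ ^ (2 : ℝ) := by
      intro n
      rw [tsum_fintype]
      show ∑ _b : Fin (8 ^ n), ‖usol z n‖ ^ (2 : ℝ) = _
      rw [Finset.sum_const, Finset.card_univ, Fintype.card_fin, nsmul_eq_mul]
      norm_num
    refine Summable.congr (f := fun n : ℕ => (8 : ℝ) ^ n * ‖usol z n‖ ^ (2 : ℝ)) ?_
      (fun n => (hfib n).symm)
    have hle : ∀ n : ℕ, (8 : ℝ) ^ n * ‖usol z n‖ ^ (2 : ℝ) ≤ (1 / 2 : ℝ) ^ n := by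
      intro n
      have hb := usol_bound z hz n
      have hb0 : (0 : ℝ) ≤ ‖usol z n‖ := norm_nonneg _
      have h1 : ‖usol z n‖ ^ (2 : ℝ) ≤ (2 ^ n / 8 ^ n) ^ (2 : ℝ) := by
        apply Real.rpow_le_rpow hb0 hb (by norm_num)
      calc (8 : ℝ) ^ n * ‖usol z n‖ ^ (2 : ℝ) ≤ 8 ^ n * (2 ^ n / 8 ^ n) ^ (2 : ℝ) := by
            apply mul_le_mul_of_nonneg_left h1 (by positivity)
        _ = (1 / 2 : ℝ) ^ n := by
            rw [show ((2 : ℝ) ^ n / 8 ^ n) ^ (2 : ℝ) = (2 ^ n / 8 ^ n) ^ (2 : ℕ) by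
              rw [← Real.rpow_natCast (2 ^ n / 8 ^ n) 2]; norm_num]
            have h4 : ((2 : ℝ) ^ n) ^ (2 : ℕ) = 4 ^ n := by
              rw [← pow_mul, mul_comm, pow_mul]; norm_num
            have h8 : ((8 : ℝ) ^ n) ≠ 0 := by positivity
            calc (8 : ℝ) ^ n * ((2 ^ n / 8 ^ n) ^ (2 : ℕ))
                = 8 ^ n * (4 ^ n / (8 ^ n) ^ (2 : ℕ)) := by rw [div_pow, h4]
              _ = 4 ^ n / 8 ^ n := by field_simp
              _ = (1 / 2 : ℝ) ^ n := by rw [← div_pow]; norm_num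
    refine Summable.of_nonneg_of_le (fun n => by positivity) hle ?_
    exact summable_geometric_of_lt_one (by norm_num) (by norm_num)

lemma gsol_eq (z : ℂ) (hz : ‖z‖ ≤ 1) :
    ∀ x, adjA Gr hGr (gsol z) x = z * gsol z x := by
  rintro ⟨n, a⟩
  rw [adjA_eq]
  have hsum : ∀ k : ℕ, ∑ b : Fin (8 ^ k), gsol z ⟨k, b⟩ = (8 : ℂ) ^ k * usol z k := by
    intro k
    show ∑ _b : Fin (8 ^ k), usol z k = _
    rw [Finset.sum_const, Finset.card_univ, Fintype.card_fin, nsmul_eq_mul]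
    norm_num
  rcases n with _ | m
  · rw [if_pos rfl, zero_add, hsum]
    show (8 : ℂ) ^ (0 + 1) * usol z (0 + 1) = z * usol z 0
    simp only [usol]
    ring
  · rw [if_neg (by omega), hsum, hsum]
    show (8 : ℂ) ^ (m + 1 - 1) * usol z (m + 1 - 1) + 8 ^ (m + 1 + 1) * usol z (m + 1 + 1)
        = z * usol z (m + 1)
    rw [show m + 1 - 1 = m from rfl, show m + 1 + 1 = m + 2 from rfl]
    simp only [usol]
    have h8 : ((8 : ℂ) ^ (m + 2)) ≠ 0 := by
      apply pow_ne_zero; norm_num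
    field_simp
    ring

lemma toRoot_surjective (z : ℂ) (hz : ‖z‖ ≤ 1) : Function.Surjective (toRoot z) := by
  set gL : L2 Vt := ⟨gsol z, gsol_memℓp z hz⟩ with hgL
  have hcoe : (gL : Vt → ℂ) = gsol z := rfl
  obtain ⟨hg, _⟩ := adjoint_mem_and_eq (g := gL) (h := z • gL)
    (fun x => by rw [hcoe, gsol_eq z hz x, lp.coeFn_smul, Pi.smul_apply, smul_eq_mul, hcoe])
  have hmem : (⟨gL, hg⟩ : (adjOp Gr hGr).adjoint.domain) ∈ defSubspace (adjOp Gr hGr) z := by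
    rw [mem_defSubspace_iff]
    intro x
    exact gsol_eq z hz x
  set y0 : defSubspace (adjOp Gr hGr) z := ⟨⟨gL, hg⟩, hmem⟩ with hy0
  have hroot : toRoot z y0 = 1 := by
    show (gL : Vt → ℂ) root = 1
    rw [hcoe]
    rfl
  intro c
  refine ⟨c • y0, ?_⟩
  rw [map_smul, hroot, smul_eq_mul, mul_one]

lemma rank_defSubspace (z : ℂ) (hz0 : z ≠ 0) (hz1 : ‖z‖ ≤ 1) :
    Module.rank ℂ (defSubspace (adjOp Gr hGr) z) = 1 := by
  have e : defSubspace (adjOp Gr hGr) z ≃ₗ[ℂ] ℂ :=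
    LinearEquiv.ofBijective (toRoot z) ⟨toRoot_injective z hz0, toRoot_surjective z hz1⟩
  rw [e.rank_eq, Module.rank_self]

lemma Gr_connected : Gr.Connected := by
  rw [SimpleGraph.connected_iff]
  refine ⟨?_, ⟨root⟩⟩
  have hroot : ∀ p : Vt, Gr.Reachable p root := by
    rintro ⟨n, a⟩
    induction n with
    | zero =>
      have : (⟨0, a⟩ : Vt) = root := by
        rcases a with ⟨v, hv⟩
        have : v = 0 := by
          have h8 : (8 : ℕ) ^ 0 = 1 := by norm_num
          omega
        subst this
        rfl
      rw [this]
    | succ m ih =>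
      have hadj : Gr.Adj ⟨m + 1, a⟩ ⟨m, ⟨0, fin_pos m⟩⟩ := by
        left; rfl
      exact hadj.reachable.trans (ih ⟨0, fin_pos m⟩)
  intro p q
  exact (hroot p).trans (hroot q).symm

end Example1


/-- There exists a connected, simple, locally finite graph `G` such that
the adjacency operator `A_G` has deficiency indices `η₊(A_G) = η₋(A_G) = 1`. -/
theorem exists_connected_graph_with_deficiency_one :
    ∃ (V : Type) (_ : Countable V) (G : SimpleGraph V) (hG : G.LocallyFinite),
      G.Connected ∧ etaP (adjOp G hG) = 1 ∧ etaM (adjOp G hG) = 1 := by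
  refine ⟨Example1.Vt, inferInstance, Example1.Gr, Example1.hGr, Example1.Gr_connected, ?_, ?_⟩
  · rw [etaP, Example1.rank_defSubspace Complex.I Complex.I_ne_zero (by rw [Complex.norm_I])]
  · rw [etaM, Example1.rank_defSubspace (-Complex.I) (by simp [Complex.I_ne_zero])
      (by rw [norm_neg, Complex.norm_I])]

end DefIdx
end
end

section
/- Let G and G' be locally finite graphs on the same countable vertex set V whose edge relations differ on only finitely many pairs of vertices. Then their adjacency operators have the same deficiency indices: η₊(A_G) = η₊(A_{G'}) and η₋(A_G) = η₋(A_{G'}). -/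
noncomputable section

open scoped ComplexConjugate

namespace DefIdx

section Stability

variable {H : Type*} [NormedAddCommGroup H] [InnerProductSpace ℂ H] [CompleteSpace H]

set_option maxHeartbeats 1000000 in
-- two-subspace rank comparison
lemma rank_orth_le {D : Submodule ℂ H} (S S' : D →ₗ[ℂ] H) {c lam : ℝ}
    (hc0 : 0 ≤ c) (hc : c < lam)
    (hcomp : ∀ f : D, ‖S f - S' f‖ ≤ c * ‖f‖)
    (hlow : ∀ f : D, lam * ‖f‖ ≤ ‖S' f‖) :
    Module.rank ℂ ((LinearMap.range S)ᗮ : Submodule ℂ H) ≤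
      Module.rank ℂ ((LinearMap.range S')ᗮ : Submodule ℂ H) := by
  have hlam : 0 < lam := lt_of_le_of_lt hc0 hc
  set R : Submodule ℂ H := LinearMap.range S with hR
  set R' : Submodule ℂ H := LinearMap.range S' with hR'
  haveI hcs : CompleteSpace (R'ᗮ : Submodule ℂ H) :=
    (Submodule.isClosed_orthogonal R').completeSpace_coe
  haveI hop : Submodule.HasOrthogonalProjection (R'ᗮ) := Submodule.HasOrthogonalProjection.ofCompleteSpace _
  -- the projection map
  let φ : (Rᗮ : Submodule ℂ H) →ₗ[ℂ] (R'ᗮ : Submodule ℂ H) :=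
    (Submodule.orthogonalProjectionOnto (R'ᗮ)).toLinearMap.comp (Rᗮ).subtype
  have hinj : Function.Injective φ := by
    rw [← LinearMap.ker_eq_bot, LinearMap.ker_eq_bot']
    intro v hv
    have hv'' : Submodule.orthogonalProjectionOnto (R'ᗮ) (v : H) = 0 := hv
    have hv' : (v : H) ∈ (R'ᗮ)ᗮ := Submodule.orthogonalProjectionOnto_eq_zero_iff.mp hv''
    rw [Submodule.orthogonal_orthogonal_eq_closure] at hv'
    -- dist to R is small on closure of R'
    have hQ : (R'.topologicalClosure : Set H) ⊆
        {u : H | Metric.infDist u (R : Set H) ≤ (c / lam) * ‖u‖} := by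
      rw [Submodule.topologicalClosure_coe]
      refine closure_minimal ?_ ?_
      · rintro u ⟨f, rfl⟩
        have h1 : Metric.infDist (S' f) (R : Set H) ≤ ‖S f - S' f‖ := by
          have hd : dist (S' f) (S f) = ‖S f - S' f‖ := by
            rw [dist_eq_norm, norm_sub_rev]
          rw [← hd]
          exact Metric.infDist_le_dist_of_mem ⟨f, rfl⟩
        have h2 : c * ‖f‖ ≤ (c / lam) * ‖S' f‖ := by
          rw [div_mul_eq_mul_div, le_div_iff₀ hlam]
          calc c * ‖f‖ * lam = c * (lam * ‖f‖) := by ring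
            _ ≤ c * ‖S' f‖ := mul_le_mul_of_nonneg_left (hlow f) hc0
        exact le_trans h1 (le_trans (hcomp f) h2)
      · exact isClosed_le (Metric.continuous_infDist_pt _)
          (continuous_const.mul continuous_norm)
    have hdist : Metric.infDist (v : H) (R : Set H) ≤ (c / lam) * ‖(v : H)‖ := hQ hv'
    -- but v ⊥ R forces infDist v R ≥ ‖v‖
    have hge : ‖(v : H)‖ ≤ Metric.infDist (v : H) (R : Set H) := by
      by_contra hcon
      push_neg at hcon
      obtain ⟨u, hu, hdu⟩ := (Metric.infDist_lt_iff ⟨0, R.zero_mem⟩).mp hcon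
      have horth : (inner ℂ u (v : H) : ℂ) = 0 := v.2 u hu
      have hsq : ‖(v : H)‖ ^ 2 ≤ dist (v : H) u ^ 2 := by
        rw [dist_eq_norm, @norm_sub_sq ℂ]
        have hre : RCLike.re (inner ℂ (v : H) u : ℂ) = 0 := by
          rw [← inner_conj_symm, horth]
          simp
        rw [hre]
        nlinarith [sq_nonneg ‖u‖]
      nlinarith [dist_nonneg (x := (v : H)) (y := u), norm_nonneg (v : H)]
    have hv0 : ‖(v : H)‖ = 0 := by
      have hlt : c / lam < 1 := (div_lt_one hlam).mpr hc
      nlinarith [norm_nonneg (v : H)]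
    exact Subtype.ext (norm_eq_zero.mp hv0)
  exact LinearMap.rank_le_of_injective φ hinj


lemma rank_defSubspace (T : H →ₗ.[ℂ] H) (hT : Dense (T.domain : Set H)) (z : ℂ) :
    Module.rank ℂ (defSubspace T z) =
      Module.rank ℂ
        ((LinearMap.range (T.toFun - (conj z) • T.domain.subtype))ᗮ : Submodule ℂ H) := by
  set R : Submodule ℂ H := LinearMap.range (T.toFun - (conj z) • T.domain.subtype) with hRdef
  have hmemR : ∀ u : H, u ∈ R ↔ ∃ f : T.domain, T f - conj z • (f : H) = u := by
    intro u
    constructor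
    · rintro ⟨f, rfl⟩; exact ⟨f, rfl⟩
    · rintro ⟨f, rfl⟩; exact ⟨f, rfl⟩
  have hker : ∀ g : T.adjoint.domain, g ∈ defSubspace T z ↔ T.adjoint g = z • (g : H) := by
    intro g
    rw [defSubspace, LinearMap.mem_ker, LinearMap.sub_apply, LinearMap.smul_apply,
      sub_eq_zero]
    rfl
  -- the forward map
  have hfwd : ∀ g : T.adjoint.domain, g ∈ defSubspace T z → (g : H) ∈ R ᗮ := by
    intro g hg u hu
    obtain ⟨f, rfl⟩ := (hmemR u).mp hu
    have hadj : (inner ℂ ((g : H)) (T f) : ℂ) = conj z * inner ℂ (g : H) (f : H) := by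
      have h1 : (inner ℂ (T.adjoint g) (f : H) : ℂ) = inner ℂ (g : H) (T f) :=
        LinearPMap.adjoint_isFormalAdjoint hT g f
      rw [← h1, (hker g).mp hg, inner_smul_left]
    have hz : (inner ℂ ((g : H)) (T f - conj z • (f : H)) : ℂ) = 0 := by
      rw [inner_sub_right, hadj, inner_smul_right]
      ring
    rw [← inner_conj_symm, hz, map_zero]
  -- the backward map
  have hbwd : ∀ v : H, v ∈ R ᗮ →
      ∃ hv : v ∈ T.adjoint.domain, (⟨v, hv⟩ : T.adjoint.domain) ∈ defSubspace T z := by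
    intro v hv
    have hkey : ∀ x : T.domain, (inner ℂ (z • v) (x : H) : ℂ) = inner ℂ v (T x) := by
      intro x
      have h0 : (inner ℂ (T x - conj z • (x : H)) v : ℂ) = 0 := by
        rw [Submodule.mem_orthogonal] at hv
        exact hv _ ((hmemR _).mpr ⟨x, rfl⟩)
      have h0' : (inner ℂ v (T x - conj z • (x : H)) : ℂ) = 0 := by
        rw [← inner_conj_symm, h0, map_zero]
      rw [inner_sub_right, inner_smul_right, sub_eq_zero] at h0'
      rw [inner_smul_left, h0']
    have hmem : v ∈ T.adjoint.domain :=
      LinearPMap.mem_adjoint_domain_of_exists (T := T) v ⟨z • v, hkey⟩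
    refine ⟨hmem, ?_⟩
    rw [hker]
    exact LinearPMap.adjoint_apply_eq hT ⟨v, hmem⟩ hkey
  -- build the linear equivalence
  let ψ : (defSubspace T z) →ₗ[ℂ] (Rᗮ : Submodule ℂ H) :=
    { toFun := fun g => ⟨(g : T.adjoint.domain), hfwd g g.2⟩
      map_add' := fun g₁ g₂ => rfl
      map_smul' := fun a g => rfl }
  have hbij : Function.Bijective ψ := by
    constructor
    · intro g₁ g₂ hgg
      have h : ((ψ g₁ : H)) = ((ψ g₂ : H)) := Subtype.ext_iff.mp hgg
      exact Subtype.ext (Subtype.ext h)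
    · rintro ⟨v, hv⟩
      obtain ⟨hv1, hv2⟩ := hbwd v hv
      exact ⟨⟨⟨v, hv1⟩, hv2⟩, rfl⟩
  exact (LinearEquiv.ofBijective ψ hbij).rank_eq


section Lower

variable {D : Submodule ℂ H}

def IsSymmOn (S : D →ₗ[ℂ] H) : Prop :=
  ∀ f g : D, (inner ℂ (S f) (g : H) : ℂ) = inner ℂ (f : H) (S g)

lemma lower_bound_symm {S : D →ₗ[ℂ] H} (hsym : IsSymmOn S) {w : ℂ} (hw : w.re = 0)
    (f : D) : ‖w‖ * ‖(f : H)‖ ≤ ‖S f - w • (f : H)‖ := by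
  have hreal : (inner ℂ (S f) ((f : H)) : ℂ).im = 0 := by
    have h1 : conj (inner ℂ (S f) ((f : H)) : ℂ) = (inner ℂ (S f) ((f : H)) : ℂ) := by
      rw [inner_conj_symm]
      exact (hsym f f).symm
    have := Complex.conj_eq_iff_im.mp h1
    exact this
  have hcross : RCLike.re (inner ℂ (S f) (w • (f : H)) : ℂ) = 0 := by
    rw [inner_smul_right]
    simp only [RCLike.re_to_complex, Complex.mul_re, hw, hreal]
    ring
  have hsq : (‖w‖ * ‖(f : H)‖) ^ 2 ≤ ‖S f - w • (f : H)‖ ^ 2 := by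
    rw [@norm_sub_sq ℂ, hcross]
    have hn : ‖w • (f : H)‖ = ‖w‖ * ‖(f : H)‖ := norm_smul _ _
    rw [hn]
    nlinarith [sq_nonneg ‖S f‖]
  nlinarith [norm_nonneg (S f - w • (f : H)),
    mul_nonneg (norm_nonneg w) (norm_nonneg ((f : H)))]

/-- Rank of deficiency space, as function of the spectral parameter. -/
def dRank (S : D →ₗ[ℂ] H) (w : ℂ) : Cardinal :=
  Module.rank ℂ ((LinearMap.range (S - w • D.subtype))ᗮ : Submodule ℂ H)

lemma dRank_eq_of_pair (S S' : D →ₗ[ℂ] H) {c lam lam' : ℝ}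
    (hc0 : 0 ≤ c) (h1 : c < lam) (h2 : c < lam')
    (hcomp : ∀ f : D, ‖S f - S' f‖ ≤ c * ‖f‖)
    (hlowS : ∀ f : D, lam * ‖f‖ ≤ ‖S f‖) (hlowS' : ∀ f : D, lam' * ‖f‖ ≤ ‖S' f‖) :
    Module.rank ℂ ((LinearMap.range S)ᗮ : Submodule ℂ H) =
      Module.rank ℂ ((LinearMap.range S')ᗮ : Submodule ℂ H) := by
  refine le_antisymm ?_ ?_
  · exact rank_orth_le S S' hc0 h2 hcomp hlowS'
  · refine rank_orth_le S' S hc0 h1 (fun f => ?_) hlowS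
    rw [norm_sub_rev]
    exact hcomp f

lemma dRank_step {S : D →ₗ[ℂ] H} (hsym : IsSymmOn S) {w w' : ℂ}
    (hw : w.re = 0) (hw' : w'.re = 0)
    (h1 : ‖w - w'‖ < ‖w‖) (h2 : ‖w - w'‖ < ‖w'‖) :
    dRank S w = dRank S w' := by
  refine dRank_eq_of_pair _ _ (norm_nonneg (w - w')) h1 h2 (fun f => ?_)
    (fun f => ?_) (fun f => ?_)
  · have : (S - w • D.subtype) f - (S - w' • D.subtype) f = (w' - w) • (f : H) := by
      simp only [LinearMap.sub_apply, LinearMap.smul_apply, Submodule.coe_subtype]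
      module
    rw [this, norm_smul, norm_sub_rev]
    exact le_of_eq (by rfl)
  · have h := lower_bound_symm hsym hw f
    simpa only [LinearMap.sub_apply, LinearMap.smul_apply, Submodule.coe_subtype,
      Submodule.coe_norm] using h
  · have h := lower_bound_symm hsym hw' f
    simpa only [LinearMap.sub_apply, LinearMap.smul_apply, Submodule.coe_subtype,
      Submodule.coe_norm] using h

lemma dRank_chain {S : D →ₗ[ℂ] H} (hsym : IsSymmOn S) {s : ℂ} (hs : s.re = 0)
    (hs1 : ‖s‖ = 1) : ∀ n : ℕ, ∀ t : ℝ, 1 ≤ t → t ≤ (5/3) ^ n →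
    dRank S ((t : ℂ) * s) = dRank S s := by
  intro n
  induction n with
  | zero =>
    intro t ht1 ht2
    have : t = 1 := le_antisymm (by simpa using ht2) ht1
    subst this
    norm_num
  | succ n ih =>
    intro t ht1 ht2
    have hts : ((t : ℂ) * s).re = 0 := by
      simp [Complex.mul_re, hs, Complex.ofReal_re, Complex.ofReal_im]
    have hnorm : ∀ a : ℝ, ‖(a : ℂ) * s‖ = |a| := by
      intro a
      rw [norm_mul, hs1, Complex.norm_real, mul_one, Real.norm_eq_abs]
    by_cases hlt : t < 2
    · have hstep : dRank S ((t : ℂ) * s) = dRank S ((1 : ℝ) * s) := by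
        refine dRank_step hsym hts (by simp [Complex.mul_re, hs]) ?_ ?_
        · have : (t : ℂ) * s - (1 : ℝ) * s = ((t - 1 : ℝ) : ℂ) * s := by
            push_cast; ring
          rw [this, hnorm, hnorm, abs_of_nonneg (by linarith), abs_of_pos (by linarith)]
          linarith
        · have : (t : ℂ) * s - (1 : ℝ) * s = ((t - 1 : ℝ) : ℂ) * s := by
            push_cast; ring
          rw [this, hnorm, hnorm, abs_of_nonneg (by linarith), abs_of_pos (zero_lt_one)]
          linarith
      rw [hstep]
      norm_num
    · push_neg at hlt
      have h1 : (1 : ℝ) ≤ 3/5 * t := by linarith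
      have h2 : 3/5 * t ≤ (5/3) ^ n := by
        have := ht2
        rw [pow_succ] at this
        linarith
      have hstep : dRank S ((t : ℂ) * s) = dRank S (((3/5 * t : ℝ) : ℂ) * s) := by
        refine dRank_step hsym hts (by simp [Complex.mul_re, hs]) ?_ ?_
        · have : (t : ℂ) * s - ((3/5 * t : ℝ) : ℂ) * s = ((2/5 * t : ℝ) : ℂ) * s := by
            push_cast; ring
          rw [this, hnorm, hnorm, abs_of_nonneg (by linarith), abs_of_pos (by linarith)]
          linarith
        · have : (t : ℂ) * s - ((3/5 * t : ℝ) : ℂ) * s = ((2/5 * t : ℝ) : ℂ) * s := by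
            push_cast; ring
          rw [this, hnorm, hnorm, abs_of_nonneg (by linarith), abs_of_pos (by linarith)]
          linarith
      rw [hstep]
      exact ih _ h1 h2

lemma dRank_scale {S : D →ₗ[ℂ] H} (hsym : IsSymmOn S) {s : ℂ} (hs : s.re = 0)
    (hs1 : ‖s‖ = 1) {t : ℝ} (ht : 1 ≤ t) :
    dRank S ((t : ℂ) * s) = dRank S s := by
  obtain ⟨n, hn⟩ := pow_unbounded_of_one_lt t (by norm_num : (1:ℝ) < 5/3)
  exact dRank_chain hsym hs hs1 n t ht hn.le

/-- Master stability lemma. -/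
lemma dRank_stable {S S' : D →ₗ[ℂ] H} (hsym : IsSymmOn S) (hsym' : IsSymmOn S')
    {b : ℝ} (hb0 : 0 ≤ b) (hcomp : ∀ f : D, ‖S f - S' f‖ ≤ b * ‖f‖)
    {s : ℂ} (hs : s.re = 0) (hs1 : ‖s‖ = 1) :
    dRank S s = dRank S' s := by
  set lam : ℝ := b + 1 with hlam
  have h1 : dRank S s = dRank S ((lam : ℂ) * s) :=
    (dRank_scale hsym hs hs1 (by linarith)).symm
  have h3 : dRank S' ((lam : ℂ) * s) = dRank S' s :=
    dRank_scale hsym' hs hs1 (by linarith)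
  have hts : ((lam : ℂ) * s).re = 0 := by simp [Complex.mul_re, hs]
  have hnorm : ‖(lam : ℂ) * s‖ = lam := by
    rw [norm_mul, hs1, Complex.norm_real, mul_one, Real.norm_eq_abs,
      abs_of_pos (by linarith)]
  have h2 : dRank S ((lam : ℂ) * s) = dRank S' ((lam : ℂ) * s) := by
    refine dRank_eq_of_pair (c := b) (lam := lam) (lam' := lam) _ _ hb0 (by linarith)
      (by linarith) (fun f => ?_) (fun f => ?_) (fun f => ?_)
    · have : (S - ((lam : ℂ) * s) • D.subtype) f - (S' - ((lam : ℂ) * s) • D.subtype) f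
          = S f - S' f := by
        simp only [LinearMap.sub_apply, LinearMap.smul_apply, Submodule.coe_subtype]
        abel
      rw [this]
      exact hcomp f
    · have h := lower_bound_symm hsym hts f
      rw [hnorm] at h
      simpa only [LinearMap.sub_apply, LinearMap.smul_apply, Submodule.coe_subtype,
        Submodule.coe_norm] using h
    · have h := lower_bound_symm hsym' hts f
      rw [hnorm] at h
      simpa only [LinearMap.sub_apply, LinearMap.smul_apply, Submodule.coe_subtype,
        Submodule.coe_norm] using h
  rw [h1, h2, h3]

end Lower

end Stability


section GraphSide

variable {V : Type*}

lemma dense_Cc : Dense ((Cc V : Submodule ℂ (L2 V)) : Set (L2 V)) := by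
  classical
  intro f
  have hsum := lp.hasSum_single (E := fun _ : V => ℂ) (p := 2) (by norm_num) f
  refine mem_closure_of_tendsto hsum (Filter.Eventually.of_forall fun s => ?_)
  show (∑ i ∈ s, lp.single 2 i (f i)) ∈ Cc V
  have hsub : {x | ((∑ i ∈ s, lp.single 2 i (f i) : L2 V) : V → ℂ) x ≠ 0} ⊆ ↑s := by
    intro x hx
    by_contra hxs
    apply hx
    show ((∑ i ∈ s, lp.single 2 i (f i) : L2 V) : V → ℂ) x = 0
    rw [lp.coeFn_sum, Finset.sum_apply]
    refine Finset.sum_eq_zero fun i hi => ?_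
    exact lp.single_apply_ne 2 i _ (fun h => hxs (h ▸ hi))
  exact s.finite_toSet.subset hsub

lemma inner_eq_sum (f g : L2 V) (W : Finset V)
    (hgW : ∀ x, (g : V → ℂ) x ≠ 0 → x ∈ W) :
    (inner ℂ f g : ℂ) = ∑ x ∈ W, conj ((f : V → ℂ) x) * ((g : V → ℂ) x) := by
  classical
  rw [lp.inner_eq_tsum]
  have h0 : ∀ x ∉ W, (inner ℂ ((f : V → ℂ) x) ((g : V → ℂ) x) : ℂ) = 0 := by
    intro x hx
    have hz : (g : V → ℂ) x = 0 := by
      by_contra h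
      exact hx (hgW x h)
    rw [hz]
    simp
  rw [tsum_eq_sum h0]
  refine Finset.sum_congr rfl fun x _ => ?_
  simp [RCLike.inner_apply, mul_comm]

lemma adjA_sum_ite (G : SimpleGraph V) (hG : G.LocallyFinite) (x : V) (u : V → ℂ)
    (W : Finset V) (hu : ∀ y, G.Adj x y → u y ≠ 0 → y ∈ W) [DecidableRel G.Adj] :
    ∑ y ∈ @SimpleGraph.neighborFinset V G x (hG x), u y
      = ∑ y ∈ W, if G.Adj x y then u y else 0 := by
  classical
  rw [← Finset.sum_filter]
  refine (Finset.sum_subset ?_ ?_).symm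
  · intro y hy
    have hy' := Finset.mem_filter.mp hy
    exact (@SimpleGraph.mem_neighborFinset V G x (hG x) y).mpr hy'.2
  · intro y hy hyn
    by_contra h
    have hadj := (@SimpleGraph.mem_neighborFinset V G x (hG x) y).mp hy
    exact hyn (Finset.mem_filter.mpr ⟨hu y hadj h, hadj⟩)

lemma adjOp_symm (G : SimpleGraph V) (hG : G.LocallyFinite) :
    IsSymmOn (adjOp G hG).toFun := by
  classical
  intro f g
  have hf : {x | ((f : L2 V) : V → ℂ) x ≠ 0}.Finite := f.2
  have hg : {x | ((g : L2 V) : V → ℂ) x ≠ 0}.Finite := g.2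
  set fv : V → ℂ := ((f : L2 V) : V → ℂ) with hfv
  set gv : V → ℂ := ((g : L2 V) : V → ℂ) with hgv
  set W : Finset V := (hf.toFinset ∪ hg.toFinset) ∪
      ((hf.toFinset ∪ hg.toFinset).biUnion
        (fun y => @SimpleGraph.neighborFinset V G y (hG y))) with hWdef
  have hfW : ∀ y, fv y ≠ 0 → y ∈ W := fun y hy =>
    Finset.mem_union_left _ (Finset.mem_union_left _ (hf.mem_toFinset.mpr hy))
  have hgW : ∀ y, gv y ≠ 0 → y ∈ W := fun y hy =>
    Finset.mem_union_left _ (Finset.mem_union_right _ (hg.mem_toFinset.mpr hy))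
  have hAfW : ∀ x, adjA G hG fv x ≠ 0 → x ∈ W := by
    intro x hx
    obtain ⟨y, hy, hfy⟩ := Finset.exists_ne_zero_of_sum_ne_zero hx
    have hadj : G.Adj x y := (@SimpleGraph.mem_neighborFinset V G x (hG x) y).mp hy
    refine Finset.mem_union_right _ (Finset.mem_biUnion.mpr ⟨y, ?_, ?_⟩)
    · exact Finset.mem_union_left _ (hf.mem_toFinset.mpr hfy)
    · exact (@SimpleGraph.mem_neighborFinset V G y (hG y) x).mpr hadj.symm
  have hAgW : ∀ x, adjA G hG gv x ≠ 0 → x ∈ W := by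
    intro x hx
    obtain ⟨y, hy, hgy⟩ := Finset.exists_ne_zero_of_sum_ne_zero hx
    have hadj : G.Adj x y := (@SimpleGraph.mem_neighborFinset V G x (hG x) y).mp hy
    refine Finset.mem_union_right _ (Finset.mem_biUnion.mpr ⟨y, ?_, ?_⟩)
    · exact Finset.mem_union_right _ (hg.mem_toFinset.mpr hgy)
    · exact (@SimpleGraph.mem_neighborFinset V G y (hG y) x).mpr hadj.symm
  have hL : (inner ℂ ((adjOp G hG).toFun f) ((g : L2 V)) : ℂ)
      = ∑ x ∈ W, ∑ y ∈ W, if G.Adj x y then conj (fv y) * gv x else 0 := by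
    rw [inner_eq_sum _ _ W hgW]
    refine Finset.sum_congr rfl fun x _ => ?_
    have hcoe : (((adjOp G hG).toFun f : L2 V) : V → ℂ) x = adjA G hG fv x := rfl
    rw [hcoe]
    have h1 : conj (adjA G hG fv x) * gv x
        = ∑ y ∈ @SimpleGraph.neighborFinset V G x (hG x), conj (fv y) * gv x := by
      rw [adjA, map_sum, Finset.sum_mul]
    rw [h1]
    exact adjA_sum_ite G hG x (fun y => conj (fv y) * gv x) W
      (fun y _ hy => hfW y (fun h0 => hy (by simp [h0])))
  have hR : (inner ℂ ((f : L2 V)) ((adjOp G hG).toFun g) : ℂ)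
      = ∑ y ∈ W, ∑ x ∈ W, if G.Adj y x then conj (fv y) * gv x else 0 := by
    rw [inner_eq_sum _ _ W hAgW]
    refine Finset.sum_congr rfl fun y _ => ?_
    have hcoe : (((adjOp G hG).toFun g : L2 V) : V → ℂ) y = adjA G hG gv y := rfl
    rw [hcoe]
    have h1 : conj (fv y) * adjA G hG gv y
        = ∑ x ∈ @SimpleGraph.neighborFinset V G y (hG y), conj (fv y) * gv x := by
      rw [adjA, Finset.mul_sum]
    rw [h1]
    exact adjA_sum_ite G hG y (fun x => conj (fv y) * gv x) W
      (fun x _ hx => hgW x (fun h0 => hx (by simp [h0])))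
  rw [hL, hR, Finset.sum_comm]
  refine Finset.sum_congr rfl fun x _ => Finset.sum_congr rfl fun y _ => ?_
  rw [G.adj_comm x y]

lemma adj_diff_bound (G G' : SimpleGraph V) (hG : G.LocallyFinite)
    (hG' : G'.LocallyFinite)
    (hfin : {p : V × V | ¬ (G.Adj p.1 p.2 ↔ G'.Adj p.1 p.2)}.Finite) :
    ∀ f : ↥(Cc V), ‖(adjOp G hG).toFun f - (adjOp G' hG').toFun f‖
      ≤ (hfin.toFinset.card : ℝ) * ‖(f : L2 V)‖ := by
  classical
  intro f
  set fv : V → ℂ := ((f : L2 V) : V → ℂ) with hfv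
  set F : Finset (V × V) := hfin.toFinset with hF
  set eps : V × V → ℂ := fun p => if G.Adj p.1 p.2 then 1 else -1 with heps
  have hdiff : (adjOp G hG).toFun f - (adjOp G' hG').toFun f
      = ∑ p ∈ F, (eps p * fv p.2) • lp.single 2 p.1 (1 : ℂ) := by
    apply lp.ext
    funext x
    have hL : (((adjOp G hG).toFun f - (adjOp G' hG').toFun f : L2 V) : V → ℂ) x
        = adjA G hG fv x - adjA G' hG' fv x := rfl
    rw [hL, lp.coeFn_sum, Finset.sum_apply]
    set Z : Finset V := (@SimpleGraph.neighborFinset V G x (hG x)) ∪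
        (@SimpleGraph.neighborFinset V G' x (hG' x)) with hZ
    have h1 : adjA G hG fv x = ∑ y ∈ Z, if G.Adj x y then fv y else 0 :=
      adjA_sum_ite G hG x fv Z (fun y hadj _ => Finset.mem_union_left _
        ((@SimpleGraph.mem_neighborFinset V G x (hG x) y).mpr hadj))
    have h2 : adjA G' hG' fv x = ∑ y ∈ Z, if G'.Adj x y then fv y else 0 :=
      adjA_sum_ite G' hG' x fv Z (fun y hadj _ => Finset.mem_union_right _
        ((@SimpleGraph.mem_neighborFinset V G' x (hG' x) y).mpr hadj))
    have hRHS : ∑ p ∈ F, ((eps p * fv p.2) • lp.single 2 p.1 (1 : ℂ) : L2 V) x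
        = ∑ y ∈ Z, if ¬ (G.Adj x y ↔ G'.Adj x y) then eps (x, y) * fv y else 0 := by
      have hstep1 : ∀ p : V × V, ((eps p * fv p.2) • lp.single 2 p.1 (1 : ℂ) : L2 V) x
          = if p.1 = x then eps p * fv p.2 else 0 := by
        intro p
        have hsmul : ((eps p * fv p.2) • lp.single 2 p.1 (1 : ℂ) : L2 V) x
            = (eps p * fv p.2) * (lp.single 2 p.1 (1 : ℂ) : L2 V) x := rfl
        rw [hsmul]
        by_cases hp : p.1 = x
        · subst hp
          rw [lp.single_apply_self, if_pos rfl, mul_one]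
        · rw [lp.single_apply_ne 2 p.1 _ (fun h => hp h.symm), if_neg hp, mul_zero]
      rw [Finset.sum_congr rfl (fun p _ => hstep1 p), ← Finset.sum_filter,
        ← Finset.sum_filter]
      refine Finset.sum_nbij' (fun p => p.2) (fun y => (x, y)) ?_ ?_ ?_ ?_ ?_
      · intro p hp
        rw [Finset.mem_filter] at hp
        obtain ⟨hpF, hpx⟩ := hp
        have hpF' : ¬ (G.Adj p.1 p.2 ↔ G'.Adj p.1 p.2) := hfin.mem_toFinset.mp hpF
        rw [hpx] at hpF'
        rw [Finset.mem_filter]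
        refine ⟨?_, hpF'⟩
        by_cases hGxy : G.Adj x p.2
        · exact Finset.mem_union_left _
            ((@SimpleGraph.mem_neighborFinset V G x (hG x) p.2).mpr hGxy)
        · have hG'xy : G'.Adj x p.2 := by tauto
          exact Finset.mem_union_right _
            ((@SimpleGraph.mem_neighborFinset V G' x (hG' x) p.2).mpr hG'xy)
      · intro y hy
        rw [Finset.mem_filter] at hy
        rw [Finset.mem_filter]
        exact ⟨hfin.mem_toFinset.mpr hy.2, rfl⟩
      · intro p hp
        rw [Finset.mem_filter] at hp
        exact Prod.ext hp.2.symm rfl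
      · intro y _
        rfl
      · intro p hp
        rw [Finset.mem_filter] at hp
        have hxp : ((x, (fun p : V × V => p.2) p) : V × V) = p := Prod.ext hp.2.symm rfl
        rw [hxp]
    rw [hRHS, h1, h2, ← Finset.sum_sub_distrib]
    refine Finset.sum_congr rfl fun y _ => ?_
    by_cases hGxy : G.Adj x y <;> by_cases hG'xy : G'.Adj x y
    · rw [if_pos hGxy, if_pos hG'xy, if_neg (by tauto), sub_self]
    · rw [if_pos hGxy, if_neg hG'xy, if_pos (by tauto), heps]
      simp only [if_pos hGxy, one_mul, sub_zero]
    · rw [if_neg hGxy, if_pos hG'xy, if_pos (by tauto), heps]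
      simp only [if_neg hGxy, zero_sub, neg_mul, one_mul]
    · rw [if_neg hGxy, if_neg hG'xy, if_neg (by tauto), sub_self]
  rw [hdiff]
  refine le_trans (norm_sum_le _ _) ?_
  have hterm : ∀ p ∈ F, ‖(eps p * fv p.2) • (lp.single 2 p.1 (1 : ℂ) : L2 V)‖
      ≤ ‖(f : L2 V)‖ := by
    intro p _
    rw [norm_smul]
    have hsingle : ‖(lp.single 2 p.1 (1 : ℂ) : L2 V)‖ = 1 := by
      have := lp.norm_single (p := 2) (E := fun _ : V => ℂ) (by norm_num)
        p.1 (1 : ℂ)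
      simpa using this
    rw [hsingle, mul_one, norm_mul]
    have heps1 : ‖eps p‖ = 1 := by
      rw [heps]
      by_cases h : G.Adj p.1 p.2 <;> simp [h]
    rw [heps1, one_mul]
    exact lp.norm_apply_le_norm (by norm_num) (f : L2 V) p.2
  calc ∑ p ∈ F, ‖(eps p * fv p.2) • (lp.single 2 p.1 (1 : ℂ) : L2 V)‖
      ≤ ∑ _p ∈ F, ‖(f : L2 V)‖ := Finset.sum_le_sum hterm
    _ = (F.card : ℝ) * ‖(f : L2 V)‖ := by
        rw [Finset.sum_const, nsmul_eq_mul]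

end GraphSide

/-- Two locally finite graphs on the same vertex set whose edge relations
differ on only finitely many pairs of vertices have adjacency operators with the same
deficiency indices. -/
theorem deficiency_stable_under_finite_edge_change {V : Type} [Countable V]
    (G G' : SimpleGraph V) (hG : G.LocallyFinite) (hG' : G'.LocallyFinite)
    (hfin : {p : V × V | ¬ (G.Adj p.1 p.2 ↔ G'.Adj p.1 p.2)}.Finite) :
    etaP (adjOp G hG) = etaP (adjOp G' hG') ∧
    etaM (adjOp G hG) = etaM (adjOp G' hG') := by
  classical
  have hdense : Dense (((adjOp G hG).domain : Submodule ℂ (L2 V)) : Set (L2 V)) := dense_Cc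
  have hdense' : Dense (((adjOp G' hG').domain : Submodule ℂ (L2 V)) : Set (L2 V)) := dense_Cc
  have hsym : IsSymmOn (adjOp G hG).toFun := adjOp_symm G hG
  have hsym' : IsSymmOn (adjOp G' hG').toFun := adjOp_symm G' hG'
  have hb0 : (0 : ℝ) ≤ (hfin.toFinset.card : ℝ) := Nat.cast_nonneg _
  have hcomp : ∀ f : ↥((adjOp G hG).domain),
      ‖(adjOp G hG).toFun f - (adjOp G' hG').toFun f‖
        ≤ (hfin.toFinset.card : ℝ) * ‖f‖ := by
    intro f
    simpa [Submodule.coe_norm] using adj_diff_bound G G' hG hG' hfin f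
  constructor
  · have e1 := rank_defSubspace (adjOp G hG) hdense Complex.I
    have e1' := rank_defSubspace (adjOp G' hG') hdense' Complex.I
    rw [Complex.conj_I] at e1 e1'
    show Module.rank ℂ (defSubspace (adjOp G hG) Complex.I)
      = Module.rank ℂ (defSubspace (adjOp G' hG') Complex.I)
    rw [e1, e1']
    exact dRank_stable hsym hsym' hb0 hcomp (by simp) (by simp)
  · have e1 := rank_defSubspace (adjOp G hG) hdense (-Complex.I)
    have e1' := rank_defSubspace (adjOp G' hG') hdense' (-Complex.I)
    rw [Complex.conj_neg_I] at e1 e1'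
    show Module.rank ℂ (defSubspace (adjOp G hG) (-Complex.I))
      = Module.rank ℂ (defSubspace (adjOp G' hG') (-Complex.I))
    rw [e1, e1']
    exact dRank_stable hsym hsym' hb0 hcomp (by simp) (by simp)

end DefIdx
end
end

section
/- Let S be a closed, densely defined symmetric operator on a complex Hilbert space and let B be a bounded self-adjoint operator on the same space. Then the closure of (S+B)|_{D(S)} has domain D(S) and the same deficiency indices as S: η₊(S+B) = η₊(S) and η₋(S+B) = η₋(S). -/
noncomputable section

open scoped ComplexConjugate

namespace DefIdx

section BddPerturbProof

open Filter

variable {H : Type*} [NormedAddCommGroup H] [InnerProductSpace ℂ H] [CompleteSpace H]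

local notation "⟪" x ", " y "⟫" => @inner ℂ _ _ x y

lemma rank_orth_le_s10 (M N : Submodule ℂ H) (hM : IsClosed (M : Set H))
    (h : ∀ u ∈ M, ‖u‖ = 1 → ∃ v ∈ N, ‖u - v‖ < 1) :
    Module.rank ℂ Nᗮ ≤ Module.rank ℂ Mᗮ := by
  haveI : CompleteSpace M := hM.completeSpace_coe
  refine LinearMap.rank_le_of_injective
    ((Submodule.orthogonalProjectionOnto Mᗮ).toLinearMap.comp Nᗮ.subtype) ?_
  rw [← LinearMap.ker_eq_bot, LinearMap.ker_eq_bot']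
  rintro ⟨u, hu⟩ h0
  have h0' : Submodule.orthogonalProjectionOnto Mᗮ u = 0 := h0
  have huM : u ∈ M := by
    have := Submodule.orthogonalProjectionOnto_eq_zero_iff.mp h0'
    rwa [Submodule.orthogonal_orthogonal] at this
  apply Subtype.ext
  show u = 0
  by_contra hu0
  set w := ‖u‖⁻¹ • u with hw
  have hw1 : ‖w‖ = 1 := norm_smul_inv_norm hu0
  have hwM : w ∈ M := M.smul_mem _ huM
  have hwN : w ∈ Nᗮ := Nᗮ.smul_mem _ hu
  obtain ⟨v, hvN, hlt⟩ := h w hwM hw1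
  have hiv : ⟪w, v⟫ = 0 := Submodule.inner_left_of_mem_orthogonal hvN hwN
  have hsq : ‖w - v‖ ^ 2 = ‖w‖ ^ 2 + ‖v‖ ^ 2 := by
    rw [@norm_sub_sq ℂ _ _ _ _ w v, hiv]
    simp
  nlinarith [norm_nonneg v, norm_nonneg (w - v)]

lemma rank_orth_eq (M N : Submodule ℂ H) (hM : IsClosed (M : Set H)) (hN : IsClosed (N : Set H))
    (h1 : ∀ u ∈ M, ‖u‖ = 1 → ∃ v ∈ N, ‖u - v‖ < 1)
    (h2 : ∀ u ∈ N, ‖u‖ = 1 → ∃ v ∈ M, ‖u - v‖ < 1) :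
    Module.rank ℂ Mᗮ = Module.rank ℂ Nᗮ :=
  le_antisymm (rank_orth_le_s10 N M hN h2) (rank_orth_le_s10 M N hM h1)


lemma lower_bound {S : H →ₗ.[ℂ] H} (hSsym : IsSymm S) {B : H →L[ℂ] H}
    (hB : IsSelfAdjoint B) (t : ℝ) {c : ℂ} (hc : c.re = 0) (hc1 : ‖c‖ = 1)
    (f : S.domain) :
    ‖(f : H)‖ ≤ ‖S.toFun f + (((t : ℂ) • B + c • (1 : H →L[ℂ] H)) : H →L[ℂ] H) (f : H)‖ := by
  have hBsym := (ContinuousLinearMap.isSelfAdjoint_iff_isSymmetric.mp hB)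
  set A : H := S.toFun f + (t : ℂ) • B (f : H) with hA
  have expand : S.toFun f + (((t : ℂ) • B + c • (1 : H →L[ℂ] H)) : H →L[ℂ] H) (f : H)
      = A + c • (f : H) := by
    simp [hA, ContinuousLinearMap.add_apply, ContinuousLinearMap.smul_apply]
    abel
  have hconj : conj ⟪A, (f : H)⟫ = ⟪A, (f : H)⟫ := by
    rw [inner_conj_symm]
    simp only [hA, LinearPMap.toFun_eq_coe, inner_add_left, inner_add_right, inner_smul_left,
      inner_smul_right, Complex.conj_ofReal]
    rw [hSsym f f, show (inner ℂ (B (f : H)) ((f : H)) : ℂ) = inner ℂ ((f : H)) (B (f : H)) from hBsym _ _]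
  have him : (⟪A, (f : H)⟫).im = 0 := Complex.conj_eq_iff_im.mp hconj
  have hre : (⟪A, c • (f : H)⟫).re = 0 := by
    rw [inner_smul_right]
    simp [Complex.mul_re, hc, him]
  have hsq : ‖A + c • (f : H)‖ ^ 2 = ‖A‖ ^ 2 + ‖(f : H)‖ ^ 2 := by
    rw [@norm_add_sq ℂ _ _ _ _ A (c • (f : H))]
    rw [norm_smul, hc1]
    simp [hre]
  rw [expand]
  nlinarith [norm_nonneg A, norm_nonneg (A + c • (f : H)), norm_nonneg (f : H)]

lemma range_closed {S : H →ₗ.[ℂ] H} (hScl : S.IsClosed) (C : H →L[ℂ] H)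
    (hlow : ∀ f : S.domain, ‖(f : H)‖ ≤ ‖S.toFun f + C (f : H)‖) :
    IsClosed ((LinearMap.range (S.toFun + (C : H →ₗ[ℂ] H).comp S.domain.subtype) : Submodule ℂ H)
      : Set H) := by
  set L := S.toFun + (C : H →ₗ[ℂ] H).comp S.domain.subtype with hLdef
  have hLf : ∀ f : S.domain, L f = S.toFun f + C (f : H) := fun f => rfl
  apply IsSeqClosed.isClosed
  intro u x hu hx
  choose f hf using hu
  have hcau : CauchySeq (fun n => ((f n : H))) := by
    rw [Metric.cauchySeq_iff]
    have hc := hx.cauchySeq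
    rw [Metric.cauchySeq_iff] at hc
    intro ε hε
    obtain ⟨N, hN⟩ := hc ε hε
    refine ⟨N, fun m hm n hn => ?_⟩
    have h1 := hN m hm n hn
    rw [dist_eq_norm] at h1 ⊢
    calc ‖(f m : H) - (f n : H)‖ = ‖((f m - f n : S.domain) : H)‖ := by push_cast; ring_nf
      _ ≤ ‖L (f m - f n)‖ := by rw [hLf]; exact hlow (f m - f n)
      _ = ‖u m - u n‖ := by rw [map_sub, hf m, hf n]
      _ < ε := h1
  obtain ⟨y, hy⟩ := cauchySeq_tendsto_of_complete hcau
  have hSf : Tendsto (fun n => S.toFun (f n)) atTop (nhds (x - C y)) := by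
    have heq : ∀ n, S.toFun (f n) = u n - C (f n : H) := by
      intro n
      rw [← hf n, hLf]
      abel
    simp_rw [heq]
    exact hx.sub ((C.continuous.tendsto y).comp hy)
  have hgraph : (y, x - C y) ∈ S.graph := by
    have hmem : ∀ n, (((f n : H)), S.toFun (f n)) ∈ S.graph := fun n => S.mem_graph (f n)
    exact hScl.mem_of_tendsto (hy.prodMk_nhds hSf) (Filter.Eventually.of_forall hmem)
  rw [LinearPMap.mem_graph_iff] at hgraph
  obtain ⟨g, hg1, hg2⟩ := hgraph
  refine ⟨g, ?_⟩
  rw [hLf]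
  rw [LinearPMap.toFun_eq_coe, hg2, hg1]
  show (x - C y) + C y = x
  abel


lemma rank_step {S : H →ₗ.[ℂ] H} (hScl : S.IsClosed) (C₁ C₂ : H →L[ℂ] H)
    (h₁ : ∀ f : S.domain, ‖(f : H)‖ ≤ ‖S.toFun f + C₁ (f : H)‖)
    (h₂ : ∀ f : S.domain, ‖(f : H)‖ ≤ ‖S.toFun f + C₂ (f : H)‖)
    (hd : ‖C₁ - C₂‖ < 1) :
    Module.rank ℂ
        ↥(LinearMap.range (S.toFun + (C₁ : H →ₗ[ℂ] H).comp S.domain.subtype))ᗮ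
      = Module.rank ℂ
        ↥(LinearMap.range (S.toFun + (C₂ : H →ₗ[ℂ] H).comp S.domain.subtype))ᗮ := by
  have key : ∀ (D₁ D₂ : H →L[ℂ] H),
      (∀ f : S.domain, ‖(f : H)‖ ≤ ‖S.toFun f + D₁ (f : H)‖) → ‖D₁ - D₂‖ < 1 →
      ∀ u ∈ LinearMap.range (S.toFun + (D₁ : H →ₗ[ℂ] H).comp S.domain.subtype), ‖u‖ = 1 →
      ∃ v ∈ LinearMap.range (S.toFun + (D₂ : H →ₗ[ℂ] H).comp S.domain.subtype), ‖u - v‖ < 1 := by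
    intro D₁ D₂ hD₁ hdd u hu hu1
    obtain ⟨g, rfl⟩ := hu
    refine ⟨(S.toFun + (D₂ : H →ₗ[ℂ] H).comp S.domain.subtype) g, ⟨g, rfl⟩, ?_⟩
    have hdiff : (S.toFun + (D₁ : H →ₗ[ℂ] H).comp S.domain.subtype) g
        - (S.toFun + (D₂ : H →ₗ[ℂ] H).comp S.domain.subtype) g = (D₁ - D₂) (g : H) := by
      simp only [LinearMap.add_apply, LinearMap.comp_apply, Submodule.coe_subtype,
        ContinuousLinearMap.coe_coe, ContinuousLinearMap.sub_apply]
      abel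
    rw [hdiff]
    have hg1 : ‖(g : H)‖ ≤ 1 := by
      calc ‖(g : H)‖ ≤ ‖S.toFun g + D₁ (g : H)‖ := hD₁ g
        _ = 1 := hu1
    calc ‖(D₁ - D₂) (g : H)‖ ≤ ‖D₁ - D₂‖ * ‖(g : H)‖ := (D₁ - D₂).le_opNorm _
      _ ≤ ‖D₁ - D₂‖ * 1 := by
          exact mul_le_mul_of_nonneg_left hg1 (norm_nonneg _)
      _ < 1 := by rw [mul_one]; exact hdd
  have hd' : ‖C₂ - C₁‖ < 1 := by rwa [norm_sub_rev]
  exact rank_orth_eq _ _ (range_closed hScl C₁ h₁) (range_closed hScl C₂ h₂)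
    (key C₁ C₂ h₁ hd) (key C₂ C₁ h₂ hd')

lemma rank_chain {S : H →ₗ.[ℂ] H} (hScl : S.IsClosed) (hSsym : IsSymm S) {B : H →L[ℂ] H}
    (hB : IsSelfAdjoint B) {c : ℂ} (hc : c.re = 0) (hc1 : ‖c‖ = 1) :
    Module.rank ℂ
        ↥(LinearMap.range (S.toFun + ((B + c • 1 : H →L[ℂ] H) : H →ₗ[ℂ] H).comp
            S.domain.subtype))ᗮ
      = Module.rank ℂ
        ↥(LinearMap.range (S.toFun + ((c • 1 : H →L[ℂ] H) : H →ₗ[ℂ] H).comp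
            S.domain.subtype))ᗮ := by
  set Ct : ℝ → (H →L[ℂ] H) := fun t => (t : ℂ) • B + c • 1 with hCt
  have hlow : ∀ (t : ℝ) (f : S.domain), ‖(f : H)‖ ≤ ‖S.toFun f + Ct t (f : H)‖ :=
    fun t f => lower_bound hSsym hB t hc hc1 f
  obtain ⟨n, hn⟩ := exists_nat_gt ‖B‖
  have hn0 : (0 : ℝ) < n := lt_of_le_of_lt (norm_nonneg B) hn
  have key : ∀ k : ℕ, k ≤ n →
      Module.rank ℂ ↥(LinearMap.range (S.toFun + ((Ct ((k : ℝ) / n)) : H →ₗ[ℂ] H).comp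
          S.domain.subtype))ᗮ
        = Module.rank ℂ ↥(LinearMap.range (S.toFun + ((Ct 0) : H →ₗ[ℂ] H).comp
          S.domain.subtype))ᗮ := by
    intro k
    induction k with
    | zero => intro _; rw [show ((0 : ℕ) : ℝ) / n = 0 by simp]
    | succ k ih =>
      intro hk
      have hk' : k ≤ n := Nat.le_of_succ_le hk
      rw [← ih hk']
      apply rank_step hScl _ _ (hlow _) (hlow _)
      have harith : (((((k + 1 : ℕ) : ℝ)) / n : ℝ) : ℂ) - ((((k : ℝ)) / n : ℝ) : ℂ)
          = (((1 : ℝ) / n : ℝ) : ℂ) := by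
        push_cast
        rw [div_sub_div_same]
        norm_num
      have hdiff : Ct (((k + 1 : ℕ) : ℝ) / n) - Ct ((k : ℝ) / n)
          = (((1 : ℝ) / n : ℝ) : ℂ) • B := by
        simp only [hCt]
        rw [add_sub_add_right_eq_sub, ← sub_smul, harith]
      rw [hdiff, norm_smul]
      have : ‖(((1 : ℝ) / n : ℝ) : ℂ)‖ = 1 / n := by
        rw [Complex.norm_real, Real.norm_eq_abs, abs_of_pos (by positivity)]
      rw [this]
      rw [div_mul_eq_mul_div, one_mul, div_lt_one hn0]
      exact hn
  have hfin := key n le_rfl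
  rw [div_self (ne_of_gt hn0)] at hfin
  have h1 : Ct 1 = B + c • 1 := by simp [hCt]
  have h0 : Ct 0 = c • 1 := by simp [hCt]
  rw [h1, h0] at hfin
  exact hfin

lemma image_defSubspace (T : H →ₗ.[ℂ] H) (hT : Dense (T.domain : Set H)) (z : ℂ) :
    Submodule.map T.adjoint.domain.subtype (defSubspace T z) =
      (LinearMap.range (T.toFun - (conj z) • T.domain.subtype))ᗮ := by
  ext x
  simp only [Submodule.mem_map, defSubspace, LinearMap.mem_ker, LinearMap.sub_apply,
    LinearMap.smul_apply, Submodule.coe_subtype, sub_eq_zero, Submodule.mem_orthogonal,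
    LinearMap.mem_range]
  constructor
  · rintro ⟨⟨g, hg⟩, hker, rfl⟩
    rintro u ⟨f, rfl⟩
    have hfa := (LinearPMap.adjoint_isFormalAdjoint hT) ⟨g, hg⟩ f
    have h1 : ⟪g, T f⟫ = conj z * ⟪g, (f : H)⟫ := by
      rw [← hfa]
      show ⟪T.adjoint.toFun ⟨g, hg⟩, (f : H)⟫ = _
      rw [hker, inner_smul_left]
    have h2 : ⟪T.toFun f, g⟫ = z * ⟪(f : H), g⟫ := by
      have h1' := congrArg conj h1
      simpa [map_mul, ← LinearPMap.toFun_eq_coe] using h1'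
    rw [inner_sub_left, h2, inner_smul_left, Complex.conj_conj, sub_self]
  · intro hx
    have key : ∀ f : T.domain, ⟪(z • x : H), (f : H)⟫ = ⟪x, T f⟫ := by
      intro f
      have h0 := hx _ ⟨f, rfl⟩
      rw [inner_sub_left, sub_eq_zero, inner_smul_left, Complex.conj_conj] at h0
      have h3 : ⟪x, T f⟫ = conj z * ⟪x, (f : H)⟫ := by
        have h0' := congrArg conj h0
        simpa [map_mul, ← LinearPMap.toFun_eq_coe] using h0'
      rw [h3, inner_smul_left]
    have hmem : x ∈ T.adjoint.domain :=
      LinearPMap.mem_adjoint_domain_of_exists _ ⟨z • x, key⟩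
    refine ⟨⟨x, hmem⟩, ?_, rfl⟩
    show T.adjoint.toFun ⟨x, hmem⟩ = z • x
    rw [LinearPMap.toFun_eq_coe]
    exact LinearPMap.adjoint_apply_eq hT ⟨x, hmem⟩ key

lemma addBdd_isClosed {S : H →ₗ.[ℂ] H} (hScl : S.IsClosed) (B : H →L[ℂ] H) :
    (addBdd S B).IsClosed := by
  have happ : ∀ f : S.domain, (addBdd S B) f = S f + B (f : H) := fun f => rfl
  have hset : ((addBdd S B).graph : Set (H × H)) =
      (fun p : H × H => (p.1, p.2 - B p.1)) ⁻¹' (S.graph : Set (H × H)) := by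
    ext ⟨x, y⟩
    simp only [Set.mem_preimage, SetLike.mem_coe, LinearPMap.mem_graph_iff]
    constructor
    · rintro ⟨f, hf1, hf2⟩
      refine ⟨f, hf1, ?_⟩
      rw [← hf1, ← hf2]
      exact eq_sub_of_add_eq (happ f).symm
    · rintro ⟨f, hf1, hf2⟩
      refine ⟨f, hf1, ?_⟩
      rw [happ, hf2, hf1]
      show y - B x + B x = y
      abel
  show _root_.IsClosed ((addBdd S B).graph : Set (H × H))
  rw [hset]
  exact hScl.preimage (continuous_fst.prodMk (continuous_snd.sub
    (B.continuous.comp continuous_fst)))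

lemma addBdd_closure_eq {S : H →ₗ.[ℂ] H} (hScl : S.IsClosed) (B : H →L[ℂ] H) :
    (addBdd S B).closure = addBdd S B := by
  have hclosed := addBdd_isClosed hScl B
  apply LinearPMap.eq_of_eq_graph
  rw [← hclosed.isClosable.graph_closure_eq_closure_graph]
  exact IsClosed.submodule_topologicalClosure_eq hclosed

lemma eta_aux {S : H →ₗ.[ℂ] H} (hScl : S.IsClosed) (hSd : Dense (S.domain : Set H))
    (hSsym : IsSymm S) {B : H →L[ℂ] H} (hB : IsSelfAdjoint B) (z : ℂ)
    (hz : z.re = 0) (hz1 : ‖z‖ = 1) :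
    Module.rank ℂ (defSubspace (addBdd S B) z) = Module.rank ℂ (defSubspace S z) := by
  set c : ℂ := -(conj z) with hcdef
  have hc : c.re = 0 := by simp [hcdef, hz]
  have hc1 : ‖c‖ = 1 := by simp [hcdef, hz1]
  have hTd : Dense ((addBdd S B).domain : Set H) := hSd
  have e1 : (addBdd S B).toFun - (conj z) • (addBdd S B).domain.subtype =
      S.toFun + ((B + c • 1 : H →L[ℂ] H) : H →ₗ[ℂ] H).comp S.domain.subtype := by
    ext f
    show (S.toFun f + B (f : H)) - conj z • (f : H) = S.toFun f + (B (f : H) + c • (f : H))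
    rw [hcdef, neg_smul, sub_eq_add_neg]
    abel
  have e2 : S.toFun - (conj z) • S.domain.subtype =
      S.toFun + ((c • 1 : H →L[ℂ] H) : H →ₗ[ℂ] H).comp S.domain.subtype := by
    ext f
    show S.toFun f - conj z • (f : H) = S.toFun f + c • (f : H)
    rw [hcdef, neg_smul, sub_eq_add_neg]
  have r1 : Module.rank ℂ (defSubspace (addBdd S B) z) =
      Module.rank ℂ (Submodule.map (addBdd S B).adjoint.domain.subtype
        (defSubspace (addBdd S B) z)) :=
    LinearEquiv.rank_eq (Submodule.equivMapOfInjective _ (Submodule.injective_subtype _) _)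
  have r2 : Module.rank ℂ (defSubspace S z) =
      Module.rank ℂ (Submodule.map S.adjoint.domain.subtype (defSubspace S z)) :=
    LinearEquiv.rank_eq (Submodule.equivMapOfInjective _ (Submodule.injective_subtype _) _)
  rw [r1, r2, image_defSubspace _ hTd z, image_defSubspace _ hSd z, e1, e2]
  exact rank_chain hScl hSsym hB hc hc1

end BddPerturbProof

/-- Adding a bounded self-adjoint operator `B` to a closed densely
defined symmetric operator `S` does not change the domain (of the closure) nor the
deficiency indices. -/
theorem bounded_perturbation_stability {H : Type} [NormedAddCommGroup H]
    [InnerProductSpace ℂ H] [CompleteSpace H] (S : H →ₗ.[ℂ] H)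
    (hScl : S.IsClosed) (hSd : Dense (S.domain : Set H)) (hSsym : IsSymm S)
    (B : H →L[ℂ] H) (hB : IsSelfAdjoint B) :
    (addBdd S B).closure.domain = S.domain ∧
    etaP (addBdd S B).closure = etaP S ∧
    etaM (addBdd S B).closure = etaM S := by
  have hceq := addBdd_closure_eq hScl B
  refine ⟨by rw [hceq]; rfl, ?_, ?_⟩
  · rw [hceq]
    exact eta_aux hScl hSd hSsym hB Complex.I (by simp) (by simp)
  · rw [hceq]
    exact eta_aux hScl hSd hSsym hB (-Complex.I) (by simp) (by simp)

end DefIdx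
end
end

section
/- Let G be a locally finite antitree with root v, spheres S_n of finite size s_n, and |x| := dist(v,x). Let P : ℓ²(V) → ℓ²(V) be the sphere-averaging operator (Pf)(x) = (1/s_{|x|}) Σ_{y ∈ S_{|x|}} f(y). Then P is the orthogonal projection onto the closed subspace of radially symmetric ℓ² functions (those constant on each sphere), and for every finitely supported f one has A_G f = P A_G P f; moreover A_G P f is radially symmetric with constant value s_{n−1} c_{n−1} + s_{n+1} c_{n+1} on the sphere S_n, where c_k denotes the constant value of Pf on S_k and s_{−1} := 0. -/
noncomputable section

open scoped ComplexConjugate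

namespace DefIdx

section AntitreeHelpers

variable {V : Type*} (G : SimpleGraph V) (v : V) (hfin : ∀ n, (sphere G v n).Finite)

lemma mem_sphFinset {x : V} {n : ℕ} : x ∈ (hfin n).toFinset ↔ G.dist v x = n := by
  simp [Set.Finite.mem_toFinset, sphere]

lemma ncard_sph (n : ℕ) : (sphere G v n).ncard = (hfin n).toFinset.card :=
  Set.ncard_eq_toFinset_card _ (hfin n)

lemma sum_eq_card_mul_avg (f : V → ℂ) (n : ℕ) :
    ∑ y ∈ (hfin n).toFinset, f y = ((sphere G v n).ncard : ℂ) * sphAvg G v hfin f n := by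
  rw [sphAvg, ncard_sph G v hfin]
  rcases eq_or_ne ((hfin n).toFinset.card) 0 with h | h
  · rw [Finset.card_eq_zero] at h
    simp [h]
  · have hc : (((hfin n).toFinset.card : ℂ)) ≠ 0 := Nat.cast_ne_zero.mpr h
    field_simp

lemma avg_const {f : V → ℂ} {n : ℕ} {c : ℂ} (hc : ∀ y, G.dist v y = n → f y = c)
    (hne : ∃ x, G.dist v x = n) : sphAvg G v hfin f n = c := by
  obtain ⟨x, hx⟩ := hne
  have hxm : x ∈ (hfin n).toFinset := (mem_sphFinset G v hfin).mpr hx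
  have hcard : ((hfin n).toFinset.card : ℂ) ≠ 0 :=
    Nat.cast_ne_zero.mpr (Finset.card_ne_zero_of_mem hxm)
  have hsum : ∑ y ∈ (hfin n).toFinset, f y = ((hfin n).toFinset.card : ℂ) * c := by
    rw [Finset.sum_congr rfl (fun y hy => hc y ((mem_sphFinset G v hfin).mp hy))]
    simp [mul_comm]
  rw [sphAvg, hsum, ncard_sph G v hfin]
  field_simp

lemma tsum_fiber_eq {M : Type*} [AddCommMonoid M] [TopologicalSpace M] [T2Space M]
    (u : V → M) (n : ℕ) :
    ∑' (x : {x : V // G.dist v x = n}), u ↑x = ∑ y ∈ (hfin n).toFinset, u y := by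
  rw [← Equiv.tsum_eq (Equiv.subtypeEquivRight
    (fun x : V => (mem_sphFinset G v hfin (x := x)))) (fun x => u ↑x)]
  exact Finset.tsum_subtype _ u

lemma summable_of_fiber_summable {u : V → ℝ} (hu : ∀ x, 0 ≤ u x)
    (h : Summable (fun n => ∑ y ∈ (hfin n).toFinset, u y)) : Summable u := by
  rw [← (Equiv.sigmaFiberEquiv (fun x : V => G.dist v x)).summable_iff]
  refine (summable_sigma_of_nonneg
    (f := u ∘ (Equiv.sigmaFiberEquiv fun x : V => G.dist v x)) (fun p => hu _)).mpr
    ⟨fun n => ?_, ?_⟩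
  · haveI : Finite {x : V // G.dist v x = n} := (hfin n).to_subtype
    exact Summable.of_finite
  · exact h.congr (fun n => (tsum_fiber_eq G v hfin u n).symm)

lemma fiber_summable {u : V → ℝ} (h : Summable u) :
    Summable (fun n => ∑ y ∈ (hfin n).toFinset, u y) := by
  have h1 := (h.hasSum.tsum_fiberwise (fun x : V => G.dist v x)).summable
  exact h1.congr (fun n => tsum_fiber_eq G v hfin u n)

lemma tsum_eq_tsum_fiber (w : V → ℂ) (hw : Summable w) :
    ∑' x, w x = ∑' n, ∑ y ∈ (hfin n).toFinset, w y := by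
  have h1 := hw.hasSum.tsum_fiberwise (fun x : V => G.dist v x)
  rw [← h1.tsum_eq]
  exact tsum_congr (fun n => tsum_fiber_eq G v hfin w n)

lemma sum_sphP_eq (f : V → ℂ) (m : ℕ) :
    ∑ y ∈ (hfin m).toFinset, sphP G v hfin f y
      = ((sphere G v m).ncard : ℂ) * sphAvg G v hfin f m := by
  have h : ∀ y ∈ (hfin m).toFinset, sphP G v hfin f y = sphAvg G v hfin f m := fun y hy => by
    simp only [sphP, (mem_sphFinset G v hfin).mp hy]
  rw [Finset.sum_congr rfl h, Finset.sum_const, nsmul_eq_mul, ncard_sph G v hfin]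

lemma adjA_eq_sum (hG : G.LocallyFinite) (hAT : IsAntitree G v) (f : V → ℂ) (x : V) :
    adjA G hG f x =
      (if G.dist v x = 0 then 0 else ∑ y ∈ (hfin (G.dist v x - 1)).toFinset, f y) +
        ∑ y ∈ (hfin (G.dist v x + 1)).toFinset, f y := by
  classical
  by_cases hx : x = v
  · rw [hx]
    have h0 : G.dist v v = 0 := by simp
    rw [h0, if_pos rfl, zero_add]
    unfold adjA
    apply Finset.sum_congr _ (fun _ _ => rfl)
    ext y
    rw [SimpleGraph.mem_neighborFinset, mem_sphFinset G v hfin]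
    simp
  · have hne : G.dist v x ≠ 0 := by
      intro h
      exact hx (hAT.1.dist_eq_zero_iff.mp h).symm
    rw [if_neg hne]
    have hN := hAT.2 x hx
    have hNf : @SimpleGraph.neighborFinset V G x (hG x) =
        (hfin (G.dist v x - 1)).toFinset ∪ (hfin (G.dist v x + 1)).toFinset := by
      ext y
      rw [SimpleGraph.mem_neighborFinset, Finset.mem_union, mem_sphFinset G v hfin,
        mem_sphFinset G v hfin]
      have hy := Set.ext_iff.mp hN y
      simpa [SimpleGraph.mem_neighborSet, sphere, Set.mem_union, Set.mem_setOf_eq] using hy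
    have hdisj : Disjoint ((hfin (G.dist v x - 1)).toFinset)
        ((hfin (G.dist v x + 1)).toFinset) := by
      rw [Finset.disjoint_left]
      intro a ha hb
      rw [mem_sphFinset G v hfin] at ha hb
      omega
    unfold adjA
    rw [hNf, Finset.sum_union hdisj]

lemma adjA_sphP (hG : G.LocallyFinite) (hAT : IsAntitree G v) (f : V → ℂ) (x : V) :
    adjA G hG (sphP G v hfin f) x =
      (if G.dist v x = 0 then 0
        else ((sphere G v (G.dist v x - 1)).ncard : ℂ) *
          sphAvg G v hfin f (G.dist v x - 1)) +
      ((sphere G v (G.dist v x + 1)).ncard : ℂ) * sphAvg G v hfin f (G.dist v x + 1) := by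
  rw [adjA_eq_sum G v hfin hG hAT]
  congr 1
  · split
    · rfl
    · exact sum_sphP_eq G v hfin f _
  · exact sum_sphP_eq G v hfin f _

end AntitreeHelpers


/-- For a locally finite antitree, the sphere-averaging map `P` is the
orthogonal projection onto the (closed) subspace of radially symmetric `ℓ²` functions
(`P` maps `ℓ²` into `ℓ²`, is idempotent, symmetric, and its fixed points are exactly the
radially symmetric functions); moreover `A_G = P A_G P` on finitely supported functions
and `A_G P f` is radially symmetric with constant value
`s_{n-1} c_{n-1} + s_{n+1} c_{n+1}` on the sphere `S_n` (with `s_{-1} = 0`). -/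
theorem antitree_sphere_projection {V : Type} [Countable V]
    (G : SimpleGraph V) (hG : G.LocallyFinite) (v : V) (hAT : IsAntitree G v)
    (hfin : ∀ n, (sphere G v n).Finite) :
    (∀ f : L2 V, Memℓp (sphP G v hfin ↑f) 2) ∧
    (∀ f : V → ℂ, sphP G v hfin (sphP G v hfin f) = sphP G v hfin f) ∧
    (∀ (f g : L2 V) (hPf : Memℓp (sphP G v hfin ↑f) 2)
        (hPg : Memℓp (sphP G v hfin ↑g) 2),
      (inner ℂ (⟨sphP G v hfin ↑f, hPf⟩ : L2 V) g : ℂ) =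
        inner ℂ f (⟨sphP G v hfin ↑g, hPg⟩ : L2 V)) ∧
    (∀ f : L2 V, sphP G v hfin ↑f = ↑f ↔ RadSymm G v ↑f) ∧
    IsClosed {f : L2 V | RadSymm G v ↑f} ∧
    (∀ f : V → ℂ, {x | f x ≠ 0}.Finite →
      adjA G hG f = sphP G v hfin (adjA G hG (sphP G v hfin f))) ∧
    (∀ f : V → ℂ, {x | f x ≠ 0}.Finite → RadSymm G v (adjA G hG (sphP G v hfin f)) ∧
      ∀ x : V,
        adjA G hG (sphP G v hfin f) x =
          (if G.dist v x = 0 then 0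
            else ((sphere G v (G.dist v x - 1)).ncard : ℂ) *
              sphAvg G v hfin f (G.dist v x - 1)) +
          ((sphere G v (G.dist v x + 1)).ncard : ℂ) *
            sphAvg G v hfin f (G.dist v x + 1)) := by
  have hpow : ∀ a : ℝ, a ^ (2 : ENNReal).toReal = a ^ (2 : ℕ) := fun a => by
    rw [ENNReal.toReal_ofNat, show ((2 : ℝ)) = ((2 : ℕ) : ℝ) by norm_num, Real.rpow_natCast]
  have hev : ∀ x : V, Continuous fun f : L2 V => (f : V → ℂ) x := by
    intro x
    have hL : LipschitzWith 1 (fun f : L2 V => (f : V → ℂ) x) := by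
      apply LipschitzWith.of_dist_le_mul
      intro f g
      rw [NNReal.coe_one, one_mul]
      calc dist ((f : V → ℂ) x) ((g : V → ℂ) x)
          = ‖((f - g : L2 V) : V → ℂ) x‖ := by
            rw [dist_eq_norm]
            congr 1
        _ ≤ ‖f - g‖ := lp.norm_apply_le_norm (by norm_num) _ x
        _ = dist f g := (dist_eq_norm f g).symm
    exact hL.continuous
  refine ⟨?_, ?_, ?_, ?_, ?_, ?_, ?_⟩
  · -- P maps ℓ² to ℓ²
    intro f
    apply memℓp_gen
    simp only [hpow]
    have hf2 : Summable fun x => ‖(f : V → ℂ) x‖ ^ (2 : ℕ) := by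
      have hm := lp.memℓp f
      rw [memℓp_gen_iff (by norm_num : 0 < (2 : ENNReal).toReal)] at hm
      simpa only [hpow] using hm
    have hg0 : Summable (fun x => (1 / ((hfin (G.dist v x)).toFinset.card : ℝ)) *
        ∑ y ∈ (hfin (G.dist v x)).toFinset, ‖(f : V → ℂ) y‖ ^ (2 : ℕ)) := by
      apply summable_of_fiber_summable G v hfin (fun x => by positivity)
      apply (fiber_summable G v hfin hf2).congr
      intro n
      have hcongr : ∀ y ∈ (hfin n).toFinset,
          (1 / ((hfin (G.dist v y)).toFinset.card : ℝ)) *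
            ∑ z ∈ (hfin (G.dist v y)).toFinset, ‖(f : V → ℂ) z‖ ^ (2 : ℕ) =
          (1 / ((hfin n).toFinset.card : ℝ)) *
            ∑ z ∈ (hfin n).toFinset, ‖(f : V → ℂ) z‖ ^ (2 : ℕ) := by
        intro y hy
        rw [(mem_sphFinset G v hfin).mp hy]
      rw [Finset.sum_congr rfl hcongr, Finset.sum_const, nsmul_eq_mul]
      rcases eq_or_ne ((hfin n).toFinset.card) 0 with h | h
      · rw [Finset.card_eq_zero] at h
        simp [h]
      · have hc : (((hfin n).toFinset.card : ℝ)) ≠ 0 := Nat.cast_ne_zero.mpr h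
        field_simp
    refine Summable.of_nonneg_of_le (fun x => by positivity) ?_ hg0
    intro x
    have hxm : x ∈ (hfin (G.dist v x)).toFinset := (mem_sphFinset G v hfin).mpr rfl
    have hcpos : (0 : ℝ) < ((hfin (G.dist v x)).toFinset.card : ℝ) := by
      exact_mod_cast Finset.card_pos.mpr ⟨x, hxm⟩
    have h1 : ‖sphP G v hfin (↑f) x‖
        = (1 / ((hfin (G.dist v x)).toFinset.card : ℝ)) *
          ‖∑ y ∈ (hfin (G.dist v x)).toFinset, (f : V → ℂ) y‖ := by
      simp only [sphP, sphAvg]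
      rw [norm_mul, ncard_sph G v hfin]
      congr 1
      simp
    rw [h1, mul_pow]
    have h2 : ‖∑ y ∈ (hfin (G.dist v x)).toFinset, (f : V → ℂ) y‖ ^ (2 : ℕ) ≤
        ((hfin (G.dist v x)).toFinset.card : ℝ) *
          ∑ y ∈ (hfin (G.dist v x)).toFinset, ‖(f : V → ℂ) y‖ ^ (2 : ℕ) := by
      calc ‖∑ y ∈ (hfin (G.dist v x)).toFinset, (f : V → ℂ) y‖ ^ (2 : ℕ)
          ≤ (∑ y ∈ (hfin (G.dist v x)).toFinset, ‖(f : V → ℂ) y‖) ^ (2 : ℕ) := by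
            gcongr
            exact norm_sum_le _ _
        _ ≤ _ := sq_sum_le_card_mul_sum_sq
    calc (1 / ((hfin (G.dist v x)).toFinset.card : ℝ)) ^ (2 : ℕ) *
          ‖∑ y ∈ (hfin (G.dist v x)).toFinset, (f : V → ℂ) y‖ ^ (2 : ℕ)
        ≤ (1 / ((hfin (G.dist v x)).toFinset.card : ℝ)) ^ (2 : ℕ) *
          (((hfin (G.dist v x)).toFinset.card : ℝ) *
            ∑ y ∈ (hfin (G.dist v x)).toFinset, ‖(f : V → ℂ) y‖ ^ (2 : ℕ)) :=
          mul_le_mul_of_nonneg_left h2 (by positivity)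
      _ = (1 / ((hfin (G.dist v x)).toFinset.card : ℝ)) *
            ∑ y ∈ (hfin (G.dist v x)).toFinset, ‖(f : V → ℂ) y‖ ^ (2 : ℕ) := by
          field_simp
  · -- idempotent
    intro f
    funext x
    show sphAvg G v hfin (sphP G v hfin f) (G.dist v x) = sphP G v hfin f x
    exact avg_const G v hfin (fun y hy => by simp only [sphP]; rw [hy]) ⟨x, rfl⟩
  · -- symmetric
    intro f g hPf hPg
    have hsum1 : Summable fun x => (starRingEnd ℂ) (sphP G v hfin (↑f) x) * (g : V → ℂ) x := by
      have h := lp.summable_inner (𝕜 := ℂ) (⟨sphP G v hfin ↑f, hPf⟩ : L2 V) g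
      simpa [RCLike.inner_apply, mul_comm] using h
    have hsum2 : Summable fun x =>
        (starRingEnd ℂ) ((f : V → ℂ) x) * sphP G v hfin (↑g) x := by
      have h := lp.summable_inner (𝕜 := ℂ) f (⟨sphP G v hfin ↑g, hPg⟩ : L2 V)
      simpa [RCLike.inner_apply, mul_comm] using h
    rw [lp.inner_eq_tsum, lp.inner_eq_tsum]
    simp only [RCLike.inner_apply, mul_comm ((g : V → ℂ) _), mul_comm (sphP G v hfin (↑g) _)]
    show ∑' x, (starRingEnd ℂ) (sphP G v hfin (↑f) x) * (g : V → ℂ) x =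
      ∑' x, (starRingEnd ℂ) ((f : V → ℂ) x) * sphP G v hfin (↑g) x
    rw [tsum_eq_tsum_fiber G v hfin _ hsum1, tsum_eq_tsum_fiber G v hfin _ hsum2]
    apply tsum_congr
    intro n
    have hL : ∑ y ∈ (hfin n).toFinset, (starRingEnd ℂ) (sphP G v hfin (↑f) y) * (g : V → ℂ) y
        = (starRingEnd ℂ) (sphAvg G v hfin (↑f) n) * ∑ y ∈ (hfin n).toFinset, (g : V → ℂ) y := by
      rw [Finset.mul_sum]
      apply Finset.sum_congr rfl
      intro y hy
      simp only [sphP, (mem_sphFinset G v hfin).mp hy]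
    have hR : ∑ y ∈ (hfin n).toFinset, (starRingEnd ℂ) ((f : V → ℂ) y) * sphP G v hfin (↑g) y
        = (starRingEnd ℂ) (∑ y ∈ (hfin n).toFinset, (f : V → ℂ) y) * sphAvg G v hfin (↑g) n := by
      rw [map_sum, Finset.sum_mul]
      apply Finset.sum_congr rfl
      intro y hy
      simp only [sphP, (mem_sphFinset G v hfin).mp hy]
    rw [hL, hR, sum_eq_card_mul_avg G v hfin (↑g) n, sum_eq_card_mul_avg G v hfin (↑f) n,
      map_mul, map_natCast]
    ring
  · -- fixed points
    intro f
    constructor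
    · intro h x y hxy
      rw [← congrFun h x, ← congrFun h y]
      show sphAvg G v hfin (↑f) (G.dist v x) = sphAvg G v hfin (↑f) (G.dist v y)
      rw [hxy]
    · intro h
      funext x
      show sphAvg G v hfin (↑f) (G.dist v x) = (f : V → ℂ) x
      exact avg_const G v hfin (fun y hy => h y x (by rw [hy])) ⟨x, rfl⟩
  · -- closedness
    have hset : {f : L2 V | RadSymm G v ↑f} =
        ⋂ (x : V), ⋂ (y : V), ⋂ (_ : G.dist v x = G.dist v y),
          {f : L2 V | (f : V → ℂ) x = (f : V → ℂ) y} := by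
      ext f
      simp only [Set.mem_iInter, Set.mem_setOf_eq]
      rfl
    rw [hset]
    exact isClosed_iInter fun x => isClosed_iInter fun y => isClosed_iInter fun _ =>
      isClosed_eq (hev x) (hev y)
  · -- A = P A P on C_c
    intro f _
    funext x
    have h1 : sphP G v hfin (adjA G hG (sphP G v hfin f)) x =
        (if G.dist v x = 0 then 0
          else ((sphere G v (G.dist v x - 1)).ncard : ℂ) *
            sphAvg G v hfin f (G.dist v x - 1)) +
        ((sphere G v (G.dist v x + 1)).ncard : ℂ) * sphAvg G v hfin f (G.dist v x + 1) := by
      show sphAvg G v hfin (adjA G hG (sphP G v hfin f)) (G.dist v x) = _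
      exact avg_const G v hfin
        (fun y hy => by rw [adjA_sphP G v hfin hG hAT, hy]) ⟨x, rfl⟩
    rw [h1, adjA_eq_sum G v hfin hG hAT]
    congr 1
    · split
      · rfl
      · exact sum_eq_card_mul_avg G v hfin f _
    · exact sum_eq_card_mul_avg G v hfin f _
  · -- formula for A P f
    intro f _
    refine ⟨?_, adjA_sphP G v hfin hG hAT f⟩
    intro x y hxy
    rw [adjA_sphP G v hfin hG hAT, adjA_sphP G v hfin hG hAT, hxy]

end DefIdx
end
end
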